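/- arXiv:2510.14458 — 5 statements merged into one kernel-verified Lean document; each statement's English description precedes it below -/
import Mathlib

section
/- Let {a_n}_{n=-∞}^{∞} be a sequence of complex numbers with finite first average ã_1 = sup over intervals w ⊂ ℤ of (1/|w|)|∑_{m∈w} a_m| < ∞. For k ≥ 0 define ã_{2^k} = sup over intervals w ⊂ ℤ with |w| ≥ 2^k of (1/|w|)|∑_{m∈w} a_m|. Then for every integer k ≥ 0, ã_{2^k} ≤ 5·ã_{2^{k+1}}. -/
open scoped ENNReal BigOperators

/-- The average `ã_n` of a two-sided complex sequence: the supremum over all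
intervals `w ⊂ ℤ` (finite sets of consecutive integers) of cardinality `≥ n`
of `(1/|w|)·|∑_{m∈w} a_m|`, valued in `ℝ≥0∞`. -/
noncomputable def seqAvg (a : ℤ → ℂ) (n : ℕ) : ℝ≥0∞ :=
  ⨆ (l : ℤ) (m : ℕ) (_ : n ≤ m + 1),
    ENNReal.ofReal (‖∑ j ∈ Finset.Icc l (l + (m : ℤ)), a j‖ / (m + 1))

/-- If the first average `ã₁` of a complex sequence is finite, then for every
`k ≥ 0` one has `ã_{2^k} ≤ 5 · ã_{2^{k+1}}`. -/
theorem avg_dyadic_almost_monotone (a : ℤ → ℂ) (h : seqAvg a 1 ≠ ⊤) (k : ℕ) :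
    seqAvg a (2 ^ k) ≤ 5 * seqAvg a (2 ^ (k + 1)) := by
  rcases eq_or_ne (seqAvg a (2 ^ (k + 1))) ⊤ with ht | ht
  · rw [ht]
    simp
  set N : ℕ := 2 ^ (k + 1) with hN
  have hN1 : 1 ≤ N := Nat.one_le_two_pow
  set A : ℝ := (seqAvg a N).toReal with hA
  have hA0 : 0 ≤ A := ENNReal.toReal_nonneg
  have key : ∀ (l' : ℤ) (m' : ℕ), N ≤ m' + 1 →
      ‖∑ j ∈ Finset.Icc l' (l' + (m' : ℤ)), a j‖ ≤ (m' + 1) * A := by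
    intro l' m' hm'
    have h1 : ENNReal.ofReal (‖∑ j ∈ Finset.Icc l' (l' + (m' : ℤ)), a j‖ / (m' + 1))
        ≤ seqAvg a N :=
      le_iSup_of_le l' (le_iSup_of_le m' (le_iSup_of_le hm' le_rfl))
    have h2 : ‖∑ j ∈ Finset.Icc l' (l' + (m' : ℤ)), a j‖ / (m' + 1) ≤ A := by
      rw [← ENNReal.ofReal_toReal ht] at h1
      exact (ENNReal.ofReal_le_ofReal_iff hA0).mp h1
    have hpos : (0 : ℝ) < m' + 1 := by positivity
    rw [div_le_iff₀ hpos] at h2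
    linarith
  refine iSup_le fun l => iSup_le fun m => iSup_le fun hm => ?_
  have hm' : (2 : ℕ) ^ k ≤ m + 1 := hm
  -- split the long interval
  have hsplit : (∑ j ∈ Finset.Icc l (l + ((m + N : ℕ) : ℤ)), a j)
      = (∑ j ∈ Finset.Icc l (l + (m : ℤ)), a j)
        + ∑ j ∈ Finset.Icc (l + (m : ℤ) + 1) (l + (m : ℤ) + 1 + ((N - 1 : ℕ) : ℤ)), a j := by
    rw [← Finset.sum_union]
    · congr 1
      ext x
      simp only [Finset.mem_union, Finset.mem_Icc]
      push_cast [Nat.cast_sub hN1]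
      omega
    · rw [Finset.disjoint_left]
      intro x hx hx'
      simp only [Finset.mem_Icc] at hx hx'
      omega
  have b1 : ‖∑ j ∈ Finset.Icc l (l + ((m + N : ℕ) : ℤ)), a j‖ ≤ ((m + N : ℕ) + 1) * A :=
    key l (m + N) (by omega)
  have b2 : ‖∑ j ∈ Finset.Icc (l + (m : ℤ) + 1) (l + (m : ℤ) + 1 + ((N - 1 : ℕ) : ℤ)), a j‖
      ≤ ((N - 1 : ℕ) + 1) * A := key (l + (m : ℤ) + 1) (N - 1) (by omega)
  have b3 : ‖∑ j ∈ Finset.Icc l (l + (m : ℤ)), a j‖ ≤ 5 * ((m + 1) * A) := by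
    have htri : ‖∑ j ∈ Finset.Icc l (l + (m : ℤ)), a j‖
        ≤ ‖∑ j ∈ Finset.Icc l (l + ((m + N : ℕ) : ℤ)), a j‖
          + ‖∑ j ∈ Finset.Icc (l + (m : ℤ) + 1) (l + (m : ℤ) + 1 + ((N - 1 : ℕ) : ℤ)), a j‖ := by
      have he : (∑ j ∈ Finset.Icc l (l + (m : ℤ)), a j)
          = (∑ j ∈ Finset.Icc l (l + ((m + N : ℕ) : ℤ)), a j)
            - ∑ j ∈ Finset.Icc (l + (m : ℤ) + 1) (l + (m : ℤ) + 1 + ((N - 1 : ℕ) : ℤ)), a j := by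
        rw [hsplit]; ring
      rw [he]
      exact norm_sub_le _ _
    have hNm : (N : ℝ) ≤ 2 * ((m : ℝ) + 1) := by
      have : N = 2 * 2 ^ k := by rw [hN]; ring
      have h2 : (N : ℝ) = 2 * (2 ^ k : ℕ) := by rw [this]; push_cast; ring
      have h3 : ((2 ^ k : ℕ) : ℝ) ≤ (m : ℝ) + 1 := by exact_mod_cast hm'
      linarith
    have hc1 : (((m + N : ℕ) : ℝ) + 1) = (m : ℝ) + (N : ℝ) + 1 := by push_cast; ring
    have hc2 : (((N - 1 : ℕ) : ℝ) + 1) = (N : ℝ) := by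
      have : ((N - 1 : ℕ) : ℝ) = (N : ℝ) - 1 := by
        push_cast [Nat.cast_sub hN1]; ring
      rw [this]; ring
    rw [hc1] at b1
    rw [hc2] at b2
    nlinarith [htri]
  -- conclude
  have h5 : (5 : ℝ≥0∞) * seqAvg a N = ENNReal.ofReal (5 * A) := by
    rw [ENNReal.ofReal_mul (by norm_num), ENNReal.ofReal_toReal ht]
    norm_num
  rw [h5]
  apply ENNReal.ofReal_le_ofReal
  rw [div_le_iff₀ (by positivity : (0:ℝ) < (m:ℝ) + 1)]
  nlinarith [b3]
end

section
/- Let {a_k}_{k=-∞}^{∞} be a complex sequence and define b_k = a_k for k ≠ 0 and b_0 = a_0/2. Then for every integer r ≥ 0, the average b̃_{2^r} := sup over intervals w ⊂ ℤ with |w| ≥ 2^r of (1/|w|)|∑_{m∈w} b_m| satisfies b̃_{2^r} ≤ 6·ã_{2^r}, where ã_{2^r} is the analogous average for {a_k}. -/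
open scoped ENNReal BigOperators

/-- If `b` is obtained from `a` by halving the term at index `0`, then
`b̃_{2^r} ≤ 6 · ã_{2^r}` for every `r ≥ 0` (assuming `ã₁ < ∞`). -/
theorem avg_zero_modification (a b : ℤ → ℂ) (h : seqAvg a 1 ≠ ⊤)
    (hb : ∀ k : ℤ, k ≠ 0 → b k = a k) (hb0 : b 0 = a 0 / 2) (r : ℕ) :
    seqAvg b (2 ^ r) ≤ 6 * seqAvg a (2 ^ r) := by
  set A := seqAvg a (2 ^ r) with hA
  have hmono : A ≤ seqAvg a 1 := by
    refine iSup_le fun l => iSup_le fun m => iSup_le fun _ => ?_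
    exact le_iSup_of_le l (le_iSup_of_le m (le_iSup_of_le (by omega) le_rfl))
  have hAtop : A ≠ ⊤ := fun ht => h (top_le_iff.mp (ht ▸ hmono))
  set Ar := A.toReal with hAr
  have hAr0 : 0 ≤ Ar := ENNReal.toReal_nonneg
  have hterm : ∀ (l : ℤ) (m : ℕ), 2 ^ r ≤ m + 1 →
      ENNReal.ofReal (‖∑ j ∈ Finset.Icc l (l + (m : ℤ)), a j‖ / (m + 1)) ≤ A :=
    fun l m hm => le_iSup_of_le l (le_iSup_of_le m (le_iSup_of_le hm le_rfl))
  have key : ∀ (l u : ℤ) (m : ℕ), u = l + (m : ℤ) → 2 ^ r ≤ m + 1 →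
      ‖∑ j ∈ Finset.Icc l u, a j‖ ≤ (m + 1) * Ar := by
    intro l u m hu hm
    subst hu
    have h1 := (ENNReal.ofReal_le_iff_le_toReal hAtop).mp (hterm l m hm)
    have hpos : (0:ℝ) < m + 1 := by positivity
    rw [div_le_iff₀ hpos] at h1
    linarith [h1]
  obtain ⟨N, hN⟩ : ∃ N : ℕ, 2 ^ r = N + 1 :=
    ⟨2 ^ r - 1, by have := Nat.one_le_two_pow (n := r); omega⟩
  -- bound ‖a 0‖
  have hsplit1 : ∑ j ∈ Finset.Icc (-(N:ℤ)) (N:ℤ), a j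
      = ∑ j ∈ Finset.Icc (-(N:ℤ)) 0, a j + ∑ j ∈ Finset.Icc 1 (N:ℤ), a j := by
    rw [← Finset.sum_union]
    · congr 1
      ext x
      simp only [Finset.mem_Icc, Finset.mem_union]
      omega
    · rw [Finset.disjoint_left]
      intro x hx hx'
      simp only [Finset.mem_Icc] at hx hx'
      omega
  have hsplit2 : ∑ j ∈ Finset.Icc (0:ℤ) (N:ℤ), a j
      = a 0 + ∑ j ∈ Finset.Icc 1 (N:ℤ), a j := by
    have hset : Finset.Icc (0:ℤ) (N:ℤ) = insert 0 (Finset.Icc 1 (N:ℤ)) := by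
      ext x
      simp only [Finset.mem_Icc, Finset.mem_insert]
      omega
    rw [hset, Finset.sum_insert (by simp)]
  have ha0 : ‖a 0‖ ≤ (4 * N + 3) * Ar := by
    have e1 := key 0 (N:ℤ) N (by ring) (by omega)
    have e2 := key (-(N:ℤ)) 0 N (by ring) (by omega)
    have e3 := key (-(N:ℤ)) (N:ℤ) (2*N) (by push_cast; ring) (by omega)
    have : a 0 = ∑ j ∈ Finset.Icc (0:ℤ) (N:ℤ), a j + ∑ j ∈ Finset.Icc (-(N:ℤ)) 0, a j
        - ∑ j ∈ Finset.Icc (-(N:ℤ)) (N:ℤ), a j := by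
      rw [hsplit1, hsplit2]; ring
    calc ‖a 0‖ ≤ ‖∑ j ∈ Finset.Icc (0:ℤ) (N:ℤ), a j‖ + ‖∑ j ∈ Finset.Icc (-(N:ℤ)) 0, a j‖
          + ‖∑ j ∈ Finset.Icc (-(N:ℤ)) (N:ℤ), a j‖ := by
          rw [this]
          exact (norm_sub_le _ _).trans (by gcongr; exact norm_add_le _ _)
      _ ≤ (N + 1) * Ar + (N + 1) * Ar + (2 * N + 1) * Ar := by
          push_cast at e3 ⊢; gcongr
      _ = (4 * N + 3) * Ar := by ring
  refine iSup_le fun l => iSup_le fun m => iSup_le fun hm => ?_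
  have hbsum : ‖∑ j ∈ Finset.Icc l (l + (m : ℤ)), b j‖
      ≤ ‖∑ j ∈ Finset.Icc l (l + (m : ℤ)), a j‖ + ‖a 0‖ / 2 := by
    by_cases h0 : (0:ℤ) ∈ Finset.Icc l (l + (m : ℤ))
    · have : ∑ j ∈ Finset.Icc l (l + (m : ℤ)), b j
          = ∑ j ∈ Finset.Icc l (l + (m : ℤ)), a j - a 0 / 2 := by
        have : ∑ j ∈ Finset.Icc l (l + (m : ℤ)), (b j - a j) = -(a 0 / 2) := by
          rw [Finset.sum_eq_single_of_mem 0 h0]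
          · rw [hb0]; ring
          · intro j _ hj; rw [hb j hj]; ring
        have h2 := this
        rw [Finset.sum_sub_distrib] at h2
        linear_combination h2
      rw [this]
      refine (norm_sub_le _ _).trans ?_
      gcongr
      rw [norm_div]
      simp
    · have : ∑ j ∈ Finset.Icc l (l + (m : ℤ)), b j = ∑ j ∈ Finset.Icc l (l + (m : ℤ)), a j :=
        Finset.sum_congr rfl fun j hj => hb j (fun hj0 => h0 (hj0 ▸ hj))
      rw [this]
      have : (0:ℝ) ≤ ‖a 0‖ / 2 := by positivity
      linarith
  have hma : ‖∑ j ∈ Finset.Icc l (l + (m : ℤ)), a j‖ ≤ (m + 1) * Ar := key l _ m rfl hm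
  have hmN : N + 1 ≤ m + 1 := by omega
  have hpos : (0:ℝ) < m + 1 := by positivity
  have hfinal : ‖∑ j ∈ Finset.Icc l (l + (m : ℤ)), b j‖ / (m + 1) ≤ 6 * Ar := by
    rw [div_le_iff₀ hpos]
    have hcast : (N : ℝ) + 1 ≤ (m : ℝ) + 1 := by exact_mod_cast hmN
    nlinarith [hbsum, ha0, hma, hAr0, hcast]
  calc ENNReal.ofReal (‖∑ j ∈ Finset.Icc l (l + (m : ℤ)), b j‖ / (m + 1))
      ≤ ENNReal.ofReal (6 * Ar) := ENNReal.ofReal_le_ofReal hfinal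
    _ = 6 * A := by
        rw [ENNReal.ofReal_mul (by norm_num : (0:ℝ) ≤ 6), ENNReal.ofReal_toReal hAtop]
        norm_num
end

section
/- Let 1 < q < ∞ and f ∈ L_{q,1}([−π,π]) with Fourier coefficients {a_k}_{k∈ℤ}. Then ‖a‖_{n_{q',∞}} := sup_{k≥1} k^{1/q'} ã_k ≤ ‖f‖_{L_{q,1}([−π,π])}, where ã_k = sup over intervals w ⊂ ℤ with |w| ≥ k of (1/|w|)|∑_{m∈w} a_m| and q' = q/(q−1). -/
open scoped Real ENNReal BigOperators
open MeasureTheory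

/-- The decreasing rearrangement `f*` of a function `f` on `[-π, π]`. -/
noncomputable def decRearr (f : ℝ → ℂ) (t : ℝ) : ℝ :=
  sInf {σ : ℝ | 0 ≤ σ ∧ volume {x ∈ Set.Icc (-π) π | σ < ‖f x‖} ≤ ENNReal.ofReal t}

open MeasureTheory Set Finset

private lemma jordan {x : ℝ} (hx : |x| ≤ π) : |x| / π ≤ |Real.sin (x / 2)| := by
  have hπ := Real.pi_pos
  have h1 : |x| / π ≤ Real.sin (|x| / 2) := by
    have := Real.mul_le_sin (x := |x| / 2) (by positivity) (by linarith)
    calc |x| / π = 2 / π * (|x| / 2) := by field_simp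
    _ ≤ _ := this
  refine h1.trans (le_of_eq ?_)
  rcases abs_cases x with ⟨h, h0⟩ | ⟨h, h0⟩
  · rw [h, abs_of_nonneg (Real.sin_nonneg_of_nonneg_of_le_pi (by linarith) (by rw [h] at hx; linarith))]
  · rw [h, neg_div, Real.sin_neg,
      abs_of_nonpos (Real.sin_nonpos_of_nonpos_of_neg_pi_le (by linarith) (by rw [h] at hx; linarith))]

private lemma norm_exp_one (j : ℤ) (x : ℝ) : ‖Complex.exp (-Complex.I * (j : ℂ) * (x : ℂ))‖ = 1 := by
  have : -Complex.I * (j : ℂ) * (x : ℂ) = ((-(j * x) : ℝ) : ℂ) * Complex.I := by push_cast; ring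
  rw [this, Complex.norm_exp_ofReal_mul_I]

private lemma norm_exp_sub_one (x : ℝ) :
    ‖Complex.exp (((-x : ℝ) : ℂ) * Complex.I) - 1‖ = 2 * |Real.sin (x / 2)| := by
  have h1 : Complex.exp (((-x : ℝ) : ℂ) * Complex.I) - 1
      = Complex.mk (Real.cos (-x) - 1) (Real.sin (-x)) := by
    rw [Complex.exp_mul_I]
    apply Complex.ext <;> simp [Complex.cos_ofReal_re, Complex.sin_ofReal_re]
  rw [h1, Complex.norm_def, Complex.normSq_mk]
  have h2 : (Real.cos (-x) - 1) * (Real.cos (-x) - 1) + Real.sin (-x) * Real.sin (-x)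
      = (2 * |Real.sin (x / 2)|) ^ 2 := by
    have h3 := Real.sin_sq_add_cos_sq (-x)
    have h4 : |Real.sin (x/2)| ^ 2 = (1 - Real.cos x) / 2 := by
      rw [Real.abs_sin_half]
      rw [Real.sq_sqrt]
      nlinarith [Real.cos_le_one x]
    rw [Real.cos_neg, Real.sin_neg] at *
    nlinarith
  rw [h2, Real.sqrt_sq (by positivity)]

private lemma kernel_bound (l : ℤ) (m : ℕ) {x : ℝ} (hx : x ∈ Set.Icc (-π) π) (hx0 : x ≠ 0) :
    ‖∑ j ∈ Finset.Icc l (l + (m : ℤ)), Complex.exp (-Complex.I * (j : ℂ) * (x : ℂ))‖ ≤ π / |x| := by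
  have hπ := Real.pi_pos
  set z : ℂ := Complex.exp (((-x : ℝ) : ℂ) * Complex.I) with hz
  have hze : ∀ j : ℤ, Complex.exp (-Complex.I * (j : ℂ) * (x : ℂ)) = z ^ j := by
    intro j
    rw [hz, ← Complex.exp_int_mul]
    congr 1; push_cast; ring
  have habs : |x| ≤ π := abs_le.2 ⟨hx.1, hx.2⟩
  have hxp : 0 < |x| := abs_pos.2 hx0
  have hsin : |x| / π ≤ |Real.sin (x / 2)| := jordan habs
  have hsinpos : 0 < |Real.sin (x/2)| := lt_of_lt_of_le (by positivity) hsin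
  have hz1 : ‖z - 1‖ = 2 * |Real.sin (x / 2)| := norm_exp_sub_one x
  have hzne : z ≠ 1 := by
    intro h
    rw [h, sub_self, norm_zero] at hz1
    linarith
  have hz0 : z ≠ 0 := Complex.exp_ne_zero _
  have hre : ∑ j ∈ Finset.Icc l (l + (m : ℤ)), z ^ j
      = z ^ l * ∑ i ∈ Finset.range (m + 1), z ^ i := by
    rw [Finset.mul_sum]
    refine Finset.sum_nbij' (fun j => (j - l).toNat) (fun i => l + (i : ℤ)) ?_ ?_ ?_ ?_ ?_
    · intro j hj
      simp only [Finset.mem_Icc, Finset.mem_range] at *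
      omega
    · intro i hi
      simp only [Finset.mem_Icc, Finset.mem_range] at *
      omega
    · intro j hj; simp only [Finset.mem_Icc] at hj
      show l + ((j - l).toNat : ℤ) = j
      omega
    · intro i hi; simp only [Finset.mem_range] at hi; omega
    · intro j hj
      simp only [Finset.mem_Icc] at hj
      show z ^ j = z ^ l * z ^ ((j - l).toNat)
      rw [← zpow_natCast z, ← zpow_add₀ hz0]
      congr 1
      omega
  calc ‖∑ j ∈ Finset.Icc l (l + (m : ℤ)), Complex.exp (-Complex.I * (j : ℂ) * (x : ℂ))‖
      = ‖z ^ l * ∑ i ∈ Finset.range (m + 1), z ^ i‖ := by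
        simp_rw [hze]; rw [hre]
    _ = ‖∑ i ∈ Finset.range (m + 1), z ^ i‖ := by
        rw [norm_mul, norm_zpow, hz, Complex.norm_exp_ofReal_mul_I]
        simp
    _ = ‖(z ^ (m + 1) - 1) / (z - 1)‖ := by rw [geom_sum_eq hzne]
    _ = ‖z ^ (m + 1) - 1‖ / ‖z - 1‖ := by rw [norm_div]
    _ ≤ 2 / (2 * (|x| / π)) := by
        apply div_le_div₀ (by positivity) _ (by positivity) (by rw [hz1]; linarith)
        calc ‖z ^ (m+1) - 1‖ ≤ ‖z ^ (m+1)‖ + ‖(1 : ℂ)‖ := norm_sub_le _ _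
          _ ≤ 2 := by
            rw [norm_pow, hz, Complex.norm_exp_ofReal_mul_I, one_pow, norm_one]
            norm_num
    _ = π / |x| := by field_simp

open scoped ENNReal

section Rearr

variable {ν : Measure ℝ} [IsFiniteMeasure ν] {g' F : ℝ → ℝ}

private lemma F_nonneg (hF : ∀ t, F t = sInf {σ : ℝ | 0 ≤ σ ∧ ν {x | σ < g' x} ≤ ENNReal.ofReal t})
    (t : ℝ) : 0 ≤ F t := by
  rw [hF]
  exact Real.sInf_nonneg fun σ hσ => hσ.1

private lemma Sne (hg : Measurable g')
    (hfin : ∫⁻ x, ENNReal.ofReal (g' x) ∂ν ≠ ⊤) {t : ℝ} (ht : 0 < t) :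
    Set.Nonempty {σ : ℝ | 0 ≤ σ ∧ ν {x | σ < g' x} ≤ ENNReal.ofReal t} := by
  set T := ∫⁻ x, ENNReal.ofReal (g' x) ∂ν with hT
  have hTR : (0:ℝ) ≤ T.toReal := ENNReal.toReal_nonneg
  refine ⟨T.toReal / t + 1, ⟨by positivity, ?_⟩⟩
  set σ : ℝ := T.toReal / t + 1 with hσ
  have hσ0 : 0 < σ := by positivity
  have hσne : (ENNReal.ofReal σ) ≠ 0 := (ENNReal.ofReal_pos.mpr hσ0).ne'
  have h1 : ν {x | σ < g' x} ≤ ν {x | ENNReal.ofReal σ ≤ ENNReal.ofReal (g' x)} :=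
    measure_mono fun x hx => ENNReal.ofReal_le_ofReal (le_of_lt hx)
  have h2 : ENNReal.ofReal σ * ν {x | ENNReal.ofReal σ ≤ ENNReal.ofReal (g' x)} ≤ T :=
    mul_meas_ge_le_lintegral₀ hg.ennreal_ofReal.aemeasurable _
  have h5 : T ≤ ENNReal.ofReal t * ENNReal.ofReal σ := by
    rw [← ENNReal.ofReal_mul ht.le]
    calc T = ENNReal.ofReal T.toReal := (ENNReal.ofReal_toReal hfin).symm
    _ ≤ ENNReal.ofReal (t * σ) := by
        apply ENNReal.ofReal_le_ofReal
        rw [hσ, mul_add, mul_one, mul_div_cancel₀ _ ht.ne']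
        linarith
  refine le_trans h1 ?_
  calc ν {x | ENNReal.ofReal σ ≤ ENNReal.ofReal (g' x)}
      ≤ T / ENNReal.ofReal σ := by
        rw [ENNReal.le_div_iff_mul_le (Or.inl hσne) (Or.inl ENNReal.ofReal_ne_top), mul_comm]
        exact h2
    _ ≤ ENNReal.ofReal t := by
        rw [ENNReal.div_le_iff_le_mul (Or.inl hσne) (Or.inl ENNReal.ofReal_ne_top)]
        exact h5

private lemma F_lb (hF : ∀ t, F t = sInf {σ : ℝ | 0 ≤ σ ∧ ν {x | σ < g' x} ≤ ENNReal.ofReal t})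
    (hg : Measurable g') (hfin : ∫⁻ x, ENNReal.ofReal (g' x) ∂ν ≠ ⊤) {t u : ℝ} (ht : 0 < t)
    (hlt : ENNReal.ofReal t < ν {x | u < g' x}) : u ≤ F t := by
  rw [hF]
  refine le_csInf (Sne hg hfin ht) fun σ hσ => ?_
  by_contra hcon
  push_neg at hcon
  have h1 : ν {x | u < g' x} ≤ ν {x | σ < g' x} :=
    measure_mono fun x hx => lt_trans hcon hx
  exact absurd (le_trans h1 hσ.2) (not_le.mpr hlt)

private lemma F_anti (hF : ∀ t, F t = sInf {σ : ℝ | 0 ≤ σ ∧ ν {x | σ < g' x} ≤ ENNReal.ofReal t})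
    (hg : Measurable g') (hfin : ∫⁻ x, ENNReal.ofReal (g' x) ∂ν ≠ ⊤) {s t : ℝ}
    (hs : 0 < s) (hst : s ≤ t) : F t ≤ F s := by
  rw [hF, hF]
  exact csInf_le_csInf ⟨0, fun σ hσ => hσ.1⟩ (Sne hg hfin hs)
    (fun σ hσ => ⟨hσ.1, hσ.2.trans (ENNReal.ofReal_le_ofReal hst)⟩)

private lemma F_meas (hF : ∀ t, F t = sInf {σ : ℝ | 0 ≤ σ ∧ ν {x | σ < g' x} ≤ ENNReal.ofReal t})
    (hg : Measurable g') (hfin : ∫⁻ x, ENNReal.ofReal (g' x) ∂ν ≠ ⊤) :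
    Measurable ((Set.Ioi (0:ℝ)).indicator F) := by
  have hG : ∀ n : ℕ, Measurable fun t => F (max t (1/(n+1))) := by
    intro n
    have ha : Antitone fun t => F (max t (1/(n+1) : ℝ)) := by
      intro t₁ t₂ h
      exact F_anti hF hg hfin (lt_max_of_lt_right (by positivity)) (max_le_max h le_rfl)
    exact ha.measurable
  apply measurable_of_tendsto_metrizable
    (f := fun n => (Set.Ioi (0:ℝ)).indicator (fun t => F (max t (1/(n+1)))))
    (fun n => (hG n).indicator measurableSet_Ioi)
  rw [tendsto_pi_nhds]
  intro t
  by_cases ht : t ∈ Set.Ioi (0:ℝ)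
  · obtain ⟨n₀, hn₀⟩ := exists_nat_one_div_lt (Set.mem_Ioi.mp ht)
    refine tendsto_const_nhds.congr' ?_
    filter_upwards [Filter.eventually_ge_atTop n₀] with n hn
    have h1 : (1:ℝ)/(n+1) ≤ t := by
      refine le_trans ?_ hn₀.le
      apply one_div_le_one_div_of_le (by positivity)
      exact_mod_cast Nat.succ_le_succ hn
    rw [Set.indicator_of_mem ht, Set.indicator_of_mem ht, max_eq_left h1]
  · refine tendsto_const_nhds.congr' ?_
    filter_upwards with n
    rw [Set.indicator_of_notMem ht, Set.indicator_of_notMem ht]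

private lemma core_rearr (hF : ∀ t, F t = sInf {σ : ℝ | 0 ≤ σ ∧ ν {x | σ < g' x} ≤ ENNReal.ofReal t})
    (hg : Measurable g') (hg0 : ∀ x, 0 ≤ g' x)
    (hfin : ∫⁻ x, ENNReal.ofReal (g' x) ∂ν ≠ ⊤) {A : Set ℝ} (hA : MeasurableSet A) :
    ∫⁻ x in A, ENNReal.ofReal (g' x) ∂ν
      ≤ ∫⁻ t in Set.Ioc 0 ((ν A).toReal), ENNReal.ofReal (F t) ∂volume := by
  by_cases hA0 : ν A = 0
  · rw [Measure.restrict_eq_zero.mpr hA0, lintegral_zero_measure]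
    exact zero_le
  have hst : ν A ≠ ⊤ := measure_ne_top ν A
  have hs0 : 0 < (ν A).toReal := ENNReal.toReal_pos hA0 hst
  set ψ : ℝ → ℝ≥0∞ := fun u => min (ν A) (ν {x | u < g' x}) with hψdef
  have hψanti : Antitone ψ := fun u v huv =>
    min_le_min le_rfl (measure_mono fun x hx => lt_of_le_of_lt huv hx)
  have hψmeas : Measurable ψ := hψanti.measurable
  have hL : ∫⁻ x in A, ENNReal.ofReal (g' x) ∂ν ≤ ∫⁻ u in Set.Ioi 0, ψ u ∂volume := by
    rw [lintegral_eq_lintegral_meas_lt (ν.restrict A) (Filter.Eventually.of_forall hg0)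
      hg.aemeasurable]
    refine lintegral_mono fun u => ?_
    rw [Measure.restrict_apply (measurableSet_lt measurable_const hg)]
    exact le_min (measure_mono Set.inter_subset_right) (measure_mono Set.inter_subset_left)
  refine hL.trans ?_
  have key : ∀ n : ℕ, ∫⁻ u in Set.Ioi (1/(n+1) : ℝ), ψ u ∂volume
      ≤ ∫⁻ t in Set.Ioc 0 ((ν A).toReal), ENNReal.ofReal (F t) ∂volume := by
    intro n
    set ε : ℝ := 1/(n+1) with hε
    have hε0 : 0 < ε := by positivity
    have htr : ∫⁻ u in Set.Ioi ε, ψ u ∂volume = ∫⁻ u in Set.Ioi 0, ψ (u + ε) ∂volume := by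
      calc ∫⁻ u in Set.Ioi ε, ψ u ∂volume
          = ∫⁻ u, (Set.Ioi ε).indicator ψ u ∂volume :=
            (lintegral_indicator measurableSet_Ioi ψ).symm
        _ = ∫⁻ u, (Set.Ioi ε).indicator ψ (u + ε) ∂volume :=
            (lintegral_add_right_eq_self (fun u => (Set.Ioi ε).indicator ψ u) ε).symm
        _ = ∫⁻ u, (Set.Ioi (0:ℝ)).indicator (fun v => ψ (v + ε)) u ∂volume := by
            refine lintegral_congr fun u => ?_
            by_cases h : 0 < u
            · rw [Set.indicator_of_mem (by simp only [Set.mem_Ioi]; linarith : u + ε ∈ Set.Ioi ε) ψ,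
                Set.indicator_of_mem (Set.mem_Ioi.mpr h)]
            · rw [Set.indicator_of_notMem (by simp; linarith : u + ε ∉ Set.Ioi ε) ψ,
                Set.indicator_of_notMem (by simpa using h)]
        _ = ∫⁻ u in Set.Ioi 0, ψ (u + ε) ∂volume :=
            lintegral_indicator measurableSet_Ioi _
    have hpt2 : ∀ u, u ∈ Set.Ioi (0:ℝ) →
        ψ (u + ε) ≤ (volume.restrict (Set.Ioc 0 ((ν A).toReal))) {t | u < F t} := by
      intro u hu
      have hdne : ν {x | u + ε < g' x} ≠ ⊤ := measure_ne_top _ _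
      set r : ℝ := min ((ν A).toReal) ((ν {x | u + ε < g' x}).toReal) with hrdef
      have hsub : Set.Ioo 0 r ⊆ {t | u < F t} ∩ Set.Ioc 0 ((ν A).toReal) := by
        intro t ht
        refine ⟨?_, ⟨ht.1, (lt_of_lt_of_le ht.2 (min_le_left _ _)).le⟩⟩
        have h1 : ENNReal.ofReal t < ν {x | u + ε < g' x} :=
          (ENNReal.ofReal_lt_iff_lt_toReal ht.1.le hdne).mpr
            (lt_of_lt_of_le ht.2 (min_le_right _ _))
        have h2 := F_lb hF hg hfin ht.1 h1
        show u < F t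
        linarith
      have hψr : ψ (u + ε) = ENNReal.ofReal r := by
        rw [hψdef]; simp only
        rcases le_total ((ν A).toReal) ((ν {x | u + ε < g' x}).toReal) with h | h
        · rw [hrdef, min_eq_left h, min_eq_left ((ENNReal.toReal_le_toReal hst hdne).mp h),
            ENNReal.ofReal_toReal hst]
        · rw [hrdef, min_eq_right h, min_eq_right ((ENNReal.toReal_le_toReal hdne hst).mp h),
            ENNReal.ofReal_toReal hdne]
      calc ψ (u + ε) = ENNReal.ofReal r := hψr
        _ = volume (Set.Ioo 0 r) := by rw [Real.volume_Ioo, sub_zero]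
        _ ≤ volume ({t | u < F t} ∩ Set.Ioc 0 ((ν A).toReal)) := measure_mono hsub
        _ = _ := (Measure.restrict_apply' measurableSet_Ioc).symm
    have hRHS : ∫⁻ t in Set.Ioc 0 ((ν A).toReal), ENNReal.ofReal (F t) ∂volume
        = ∫⁻ u in Set.Ioi 0, (volume.restrict (Set.Ioc 0 ((ν A).toReal))) {t | u < F t} ∂volume := by
      refine lintegral_eq_lintegral_meas_lt _ (Filter.Eventually.of_forall fun t => F_nonneg hF t) ?_
      exact ⟨(Set.Ioi 0).indicator F, F_meas hF hg hfin,
        (ae_restrict_mem measurableSet_Ioc).mono fun t ht => (Set.indicator_of_mem ht.1 F).symm⟩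
    rw [htr, hRHS]
    exact lintegral_mono_ae ((ae_restrict_mem measurableSet_Ioi).mono hpt2)
  have hS1 : ∫⁻ u in Set.Ioi (0:ℝ), ψ u ∂volume
      = ⨆ n : ℕ, ∫⁻ u in Set.Ioi (1/(n+1) : ℝ), ψ u ∂volume := by
    have hmono : Monotone (fun n : ℕ => (Set.Ioi (1/(n+1):ℝ)).indicator ψ) := by
      intro n₁ n₂ h
      refine Set.indicator_le_indicator_of_subset (Set.Ioi_subset_Ioi ?_) (fun _ => zero_le)
      apply one_div_le_one_div_of_le (by positivity)
      exact_mod_cast Nat.succ_le_succ h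
    calc ∫⁻ u in Set.Ioi (0:ℝ), ψ u ∂volume
        = ∫⁻ u, (Set.Ioi (0:ℝ)).indicator ψ u ∂volume :=
          (lintegral_indicator measurableSet_Ioi ψ).symm
      _ = ∫⁻ u, ⨆ n : ℕ, (Set.Ioi (1/(n+1):ℝ)).indicator ψ u ∂volume := by
          refine lintegral_congr fun u => ?_
          by_cases h : u ∈ Set.Ioi (0:ℝ)
          · rw [Set.indicator_of_mem h]
            refine le_antisymm ?_ (iSup_le fun n => (Set.indicator_le_self _ _) u)
            obtain ⟨n, hn⟩ := exists_nat_one_div_lt (Set.mem_Ioi.mp h)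
            exact le_iSup_of_le n (le_of_eq (Set.indicator_of_mem (Set.mem_Ioi.mpr hn) ψ).symm)
          · rw [Set.indicator_of_notMem h]
            symm
            simp only [ENNReal.iSup_eq_zero]
            intro n
            refine Set.indicator_of_notMem (fun hc => h ?_) ψ
            exact Set.mem_Ioi.mpr (lt_trans (by positivity) hc)
      _ = ⨆ n : ℕ, ∫⁻ u, (Set.Ioi (1/(n+1):ℝ)).indicator ψ u ∂volume :=
          lintegral_iSup (fun n => hψmeas.indicator measurableSet_Ioi) hmono
      _ = ⨆ n : ℕ, ∫⁻ u in Set.Ioi (1/(n+1):ℝ), ψ u ∂volume := by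
          refine iSup_congr fun n => lintegral_indicator measurableSet_Ioi ψ
  rw [hS1]
  exact iSup_le key

private lemma weighted_rearr
    (hF : ∀ t, F t = sInf {σ : ℝ | 0 ≤ σ ∧ ν {x | σ < g' x} ≤ ENNReal.ofReal t})
    (hg : Measurable g') (hg0 : ∀ x, 0 ≤ g' x)
    (hfin : ∫⁻ x, ENNReal.ofReal (g' x) ∂ν ≠ ⊤) {N : ℝ} (hN : 1 ≤ N)
    (hν : ∀ {σ : ℝ}, 0 < σ → σ < N →
      ν {x | σ < min N (π / |x|)} = ENNReal.ofReal (min (2*π) (2*π/σ))) :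
    ∫⁻ x, ENNReal.ofReal (g' x) * ENNReal.ofReal (min N (π / |x|)) ∂ν ≤
      ∫⁻ t in Set.Ioc 0 (2*π), ENNReal.ofReal (F t) * ENNReal.ofReal (min N (2*π/t)) ∂volume := by
  classical
  have hπ := Real.pi_pos
  have hM : Measurable ((Set.Ioi (0:ℝ)).indicator F) := F_meas hF hg hfin
  set M := (Set.Ioi (0:ℝ)).indicator F with hMdef
  have hMF : ∀ {t : ℝ}, 0 < t → M t = F t := fun ht => Set.indicator_of_mem ht F
  set S : Set (ℝ × ℝ) := {p | 0 < p.2 ∧ p.2 < min N (π / |p.1|)} with hSdef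
  have hwm : Measurable fun x : ℝ => min N (π / |x|) :=
    measurable_const.min (measurable_const.div measurable_abs)
  have hSm : MeasurableSet S := by
    refine MeasurableSet.inter ?_ ?_
    · exact measurableSet_lt measurable_const measurable_snd
    · exact measurableSet_lt measurable_snd (hwm.comp measurable_fst)
  set T : Set (ℝ × ℝ) := {p | 0 < p.1 ∧ p.1 < N ∧ p.1 * p.2 ≤ 2*π} with hTdef
  have hTm : MeasurableSet T := by
    refine MeasurableSet.inter ?_ (MeasurableSet.inter ?_ ?_)
    · exact measurableSet_lt measurable_const measurable_fst
    · exact measurableSet_lt measurable_fst measurable_const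
    · exact measurableSet_le (measurable_fst.mul measurable_snd) measurable_const
  have h1 : ∀ x : ℝ, ∫⁻ σ, ENNReal.ofReal (g' x) * S.indicator (fun _ => 1) (x, σ) ∂volume
      = ENNReal.ofReal (g' x) * ENNReal.ofReal (min N (π / |x|)) := by
    intro x
    rw [lintegral_const_mul' _ _ ENNReal.ofReal_ne_top]
    congr 1
    have hind : (fun σ => S.indicator (fun _ => (1:ℝ≥0∞)) (x, σ))
        = (Set.Ioo 0 (min N (π / |x|))).indicator (fun _ => 1) := by
      funext σ
      by_cases h : σ ∈ Set.Ioo 0 (min N (π / |x|))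
      · rw [Set.indicator_of_mem h, Set.indicator_of_mem (show (x, σ) ∈ S from ⟨h.1, h.2⟩)]
      · rw [Set.indicator_of_notMem h, Set.indicator_of_notMem
          (show (x, σ) ∉ S from fun hc => h ⟨hc.1, hc.2⟩)]
    rw [hind, lintegral_indicator_const measurableSet_Ioo, one_mul, Real.volume_Ioo, sub_zero]
  have hum : Measurable fun p : ℝ × ℝ =>
      ENNReal.ofReal (g' p.1) * S.indicator (fun _ => (1:ℝ≥0∞)) p :=
    ((hg.comp measurable_fst).ennreal_ofReal).mul (measurable_const.indicator hSm)
  have h2 : ∫⁻ x, ENNReal.ofReal (g' x) * ENNReal.ofReal (min N (π / |x|)) ∂ν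
      = ∫⁻ σ, ∫⁻ x, ENNReal.ofReal (g' x) * S.indicator (fun _ => 1) (x, σ) ∂ν ∂volume := by
    rw [← lintegral_lintegral_swap (f := fun x σ =>
      ENNReal.ofReal (g' x) * S.indicator (fun _ => (1:ℝ≥0∞)) (x, σ)) hum.aemeasurable]
    exact (lintegral_congr h1).symm
  have h3 : ∀ σ : ℝ, ∫⁻ x, ENNReal.ofReal (g' x) * S.indicator (fun _ => 1) (x, σ) ∂ν
      ≤ ∫⁻ t in Set.Ioc 0 (2*π),
          ENNReal.ofReal (M t) * T.indicator (fun _ => 1) (σ, t) ∂volume := by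
    intro σ
    by_cases hσ1 : 0 < σ ∧ σ < N
    case neg =>
      have hz : ∀ x : ℝ, ENNReal.ofReal (g' x) * S.indicator (fun _ => (1:ℝ≥0∞)) (x, σ) = 0 := by
        intro x
        rw [Set.indicator_of_notMem, mul_zero]
        rintro ⟨hc1, hc2⟩
        exact hσ1 ⟨hc1, lt_of_lt_of_le hc2 (min_le_left _ _)⟩
      simp_rw [hz, lintegral_zero]
      exact zero_le
    case pos =>
    obtain ⟨hσ0, hσN⟩ := hσ1
    have hAm : MeasurableSet {x : ℝ | σ < min N (π / |x|)} := measurableSet_lt measurable_const hwm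
    have e1 : ∫⁻ x, ENNReal.ofReal (g' x) * S.indicator (fun _ => 1) (x, σ) ∂ν
        = ∫⁻ x in {x : ℝ | σ < min N (π / |x|)}, ENNReal.ofReal (g' x) ∂ν := by
      rw [← lintegral_indicator hAm]
      refine lintegral_congr fun x => ?_
      by_cases h : σ < min N (π / |x|)
      · rw [Set.indicator_of_mem (show (x, σ) ∈ S from ⟨hσ0, h⟩),
          Set.indicator_of_mem (show x ∈ {x : ℝ | σ < min N (π / |x|)} from h), mul_one]
      · rw [Set.indicator_of_notMem (show (x, σ) ∉ S from fun hc => h hc.2),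
          Set.indicator_of_notMem (show x ∉ {x : ℝ | σ < min N (π / |x|)} from h), mul_zero]
    set mσ : ℝ := min (2*π) (2*π/σ) with hmσ
    have hmσ0 : 0 ≤ mσ := le_min (by positivity) (by positivity)
    have hmσ2π : mσ ≤ 2*π := min_le_left _ _
    have e2 : ((ν {x : ℝ | σ < min N (π / |x|)}).toReal) = mσ := by
      rw [hν hσ0 hσN, ENNReal.toReal_ofReal hmσ0]
    have e3 := core_rearr hF hg hg0 hfin hAm
    rw [e2] at e3
    rw [e1]
    refine e3.trans ?_
    have e4 : ∫⁻ t in Set.Ioc 0 mσ, ENNReal.ofReal (F t) ∂volume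
        = ∫⁻ t in Set.Ioc 0 (2*π),
            (Set.Ioc 0 mσ).indicator (fun t => ENNReal.ofReal (F t)) t ∂volume := by
      rw [lintegral_indicator measurableSet_Ioc, Measure.restrict_restrict measurableSet_Ioc,
        Set.inter_eq_self_of_subset_left (Set.Ioc_subset_Ioc le_rfl hmσ2π)]
    rw [e4]
    refine lintegral_mono_ae ?_
    filter_upwards [ae_restrict_mem measurableSet_Ioc] with t ht
    by_cases hmem : t ∈ Set.Ioc 0 mσ
    · rw [Set.indicator_of_mem hmem]
      have hTmem : (σ, t) ∈ T := by
        refine ⟨hσ0, hσN, ?_⟩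
        have h5 : t ≤ 2*π/σ := le_trans hmem.2 (min_le_right _ _)
        calc σ * t ≤ σ * (2*π/σ) := mul_le_mul_of_nonneg_left h5 hσ0.le
          _ = 2*π := by field_simp
      rw [Set.indicator_of_mem hTmem, mul_one, hMF ht.1]
    · rw [Set.indicator_of_notMem hmem]
      exact zero_le
  have hum2 : Measurable fun p : ℝ × ℝ =>
      ENNReal.ofReal (M p.2) * T.indicator (fun _ => (1:ℝ≥0∞)) p :=
    ((hM.comp measurable_snd).ennreal_ofReal).mul (measurable_const.indicator hTm)
  have h4 : ∫⁻ σ, ∫⁻ t in Set.Ioc 0 (2*π),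
        ENNReal.ofReal (M t) * T.indicator (fun _ => 1) (σ, t) ∂volume ∂volume
      = ∫⁻ t in Set.Ioc 0 (2*π), ∫⁻ σ,
          ENNReal.ofReal (M t) * T.indicator (fun _ => 1) (σ, t) ∂volume ∂volume :=
    lintegral_lintegral_swap (f := fun σ t =>
      ENNReal.ofReal (M t) * T.indicator (fun _ => (1:ℝ≥0∞)) (σ, t)) hum2.aemeasurable
  have h5 : ∀ t ∈ Set.Ioc (0:ℝ) (2*π),
      ∫⁻ σ, ENNReal.ofReal (M t) * T.indicator (fun _ => 1) (σ, t) ∂volume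
        = ENNReal.ofReal (M t) * ENNReal.ofReal (min N (2*π/t)) := by
    intro t ht
    rw [lintegral_const_mul' _ _ ENNReal.ofReal_ne_top]
    congr 1
    have hset : (fun σ => T.indicator (fun _ => (1:ℝ≥0∞)) (σ, t))
        = (Set.Ioo 0 N ∩ Set.Iic (2*π/t)).indicator (fun _ => 1) := by
      funext σ
      by_cases h : σ ∈ Set.Ioo 0 N ∩ Set.Iic (2*π/t)
      · rw [Set.indicator_of_mem h, Set.indicator_of_mem (show (σ, t) ∈ T from
          ⟨h.1.1, h.1.2, (le_div_iff₀ ht.1).mp h.2⟩)]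
      · rw [Set.indicator_of_notMem h, Set.indicator_of_notMem (show (σ, t) ∉ T from
          fun hc => h ⟨⟨hc.1, hc.2.1⟩, (le_div_iff₀ ht.1).mpr hc.2.2⟩)]
    rw [hset, lintegral_indicator_const (measurableSet_Ioo.inter measurableSet_Iic), one_mul]
    rcases lt_or_ge (2*π/t) N with h | h
    · have hEq : Set.Ioo 0 N ∩ Set.Iic (2*π/t) = Set.Ioc 0 (2*π/t) := by
        ext σ
        constructor
        · rintro ⟨⟨h1, _⟩, h3⟩
          exact ⟨h1, h3⟩
        · rintro ⟨h1, h2⟩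
          exact ⟨⟨h1, lt_of_le_of_lt h2 h⟩, h2⟩
      rw [hEq, Real.volume_Ioc, sub_zero, min_eq_right h.le]
    · have hEq : Set.Ioo 0 N ∩ Set.Iic (2*π/t) = Set.Ioo 0 N := by
        ext σ
        constructor
        · rintro ⟨h1, _⟩
          exact h1
        · intro h1
          exact ⟨h1, le_trans h1.2.le h⟩
      rw [hEq, Real.volume_Ioo, sub_zero, min_eq_left h]
  calc ∫⁻ x, ENNReal.ofReal (g' x) * ENNReal.ofReal (min N (π / |x|)) ∂ν
      = ∫⁻ σ, ∫⁻ x, ENNReal.ofReal (g' x) * S.indicator (fun _ => 1) (x, σ) ∂ν ∂volume := h2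
    _ ≤ ∫⁻ σ, ∫⁻ t in Set.Ioc 0 (2*π),
          ENNReal.ofReal (M t) * T.indicator (fun _ => 1) (σ, t) ∂volume ∂volume :=
        lintegral_mono h3
    _ = ∫⁻ t in Set.Ioc 0 (2*π), ∫⁻ σ,
          ENNReal.ofReal (M t) * T.indicator (fun _ => 1) (σ, t) ∂volume ∂volume := h4
    _ = ∫⁻ t in Set.Ioc 0 (2*π), ENNReal.ofReal (M t) * ENNReal.ofReal (min N (2*π/t)) ∂volume := by
        refine lintegral_congr_ae ?_
        filter_upwards [ae_restrict_mem measurableSet_Ioc] with t ht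
        exact h5 t ht
    _ = ∫⁻ t in Set.Ioc 0 (2*π), ENNReal.ofReal (F t) * ENNReal.ofReal (min N (2*π/t)) ∂volume := by
        refine lintegral_congr_ae ?_
        filter_upwards [ae_restrict_mem measurableSet_Ioc] with t ht
        rw [hMF ht.1]

end Rearr

private lemma measure_Aσ {N σ : ℝ} (hσ0 : 0 < σ) (hσN : σ < N) :
    (volume.restrict (Set.Icc (-π) π)) {x : ℝ | σ < min N (π / |x|)}
      = ENNReal.ofReal (min (2*π) (2*π/σ)) := by
  have hπ := Real.pi_pos
  have hc0 : 0 < π/σ := by positivity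
  have hset : {x : ℝ | σ < min N (π / |x|)} = Set.Ioo (-(π/σ)) (π/σ) \ {0} := by
    ext x
    simp only [Set.mem_setOf_eq, lt_min_iff, Set.mem_diff, Set.mem_Ioo, Set.mem_singleton_iff]
    constructor
    · rintro ⟨-, h2⟩
      have hx0 : x ≠ 0 := by
        rintro rfl
        rw [abs_zero, div_zero] at h2
        exact absurd h2 (not_lt.mpr hσ0.le)
      have hxa : 0 < |x| := abs_pos.mpr hx0
      have h3 : σ * |x| < π := (lt_div_iff₀ hxa).mp h2
      have h4 : |x| < π / σ := (lt_div_iff₀ hσ0).mpr (by nlinarith)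
      exact ⟨abs_lt.mp h4, hx0⟩
    · rintro ⟨⟨h1, h2⟩, hx0⟩
      have hxa : 0 < |x| := abs_pos.mpr hx0
      have hxc : |x| < π/σ := abs_lt.mpr ⟨h1, h2⟩
      refine ⟨hσN, ?_⟩
      have h3 : |x| * σ < π := (lt_div_iff₀ hσ0).mp hxc
      exact (lt_div_iff₀ hxa).mpr (by nlinarith)
  rw [Measure.restrict_apply' measurableSet_Icc, hset]
  have hcomm : (Set.Ioo (-(π/σ)) (π/σ) \ {0}) ∩ Set.Icc (-π) π
      = (Set.Ioo (-(π/σ)) (π/σ) ∩ Set.Icc (-π) π) \ {0} := by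
    ext x
    simp only [Set.mem_inter_iff, Set.mem_diff]
    tauto
  rw [hcomm, measure_diff_null (measure_singleton 0)]
  rcases lt_or_ge π (π/σ) with h | h
  · have hsub : Set.Icc (-π) π ⊆ Set.Ioo (-(π/σ)) (π/σ) :=
      fun x hx => ⟨by simp only [Set.mem_Icc] at hx; linarith [hx.1], by
        simp only [Set.mem_Icc] at hx; linarith [hx.2]⟩
    rw [Set.inter_eq_self_of_subset_right hsub, Real.volume_Icc,
      min_eq_left (by rw [le_div_iff₀ hσ0]; rw [lt_div_iff₀ hσ0] at h; nlinarith)]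
    congr 1
    ring
  · have hsub : Set.Ioo (-(π/σ)) (π/σ) ⊆ Set.Icc (-π) π :=
      fun x hx => ⟨by simp only [Set.mem_Ioo] at hx; linarith [hx.1], by
        simp only [Set.mem_Ioo] at hx; linarith [hx.2]⟩
    rw [Set.inter_eq_self_of_subset_left hsub, Real.volume_Ioo,
      min_eq_right (by rw [div_le_iff₀ hσ0]; rw [div_le_iff₀ hσ0] at h; nlinarith)]
    congr 1
    ring

private lemma key_ineq {q k N t : ℝ} (hq : 1 < q) (hk : 1 ≤ k) (hkN : k ≤ N) (ht : 0 < t)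
    (ht2 : t ≤ 2*π) : k ^ (1 - 1/q) / (2*π*N) * min N (2*π/t) ≤ t ^ (1/q - 1) := by
  have hπ := Real.pi_pos
  have hπ3 : (3:ℝ) < π := Real.pi_gt_three
  have hq0 : 0 < q := by linarith
  have hq1 : 0 < 1/q := by positivity
  have hα0 : 0 < 1 - 1/q := by
    have h : 1/q < 1 := by rw [div_lt_one hq0]; exact hq
    linarith
  set α := 1 - 1/q with hα
  have hN0 : 0 < N := by linarith
  have hmin0 : 0 ≤ min N (2*π/t) := le_min hN0.le (by positivity)
  have hkα : k ^ α ≤ N ^ α := Real.rpow_le_rpow (by linarith) hkN hα0.le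
  have htα : 0 < t ^ α := Real.rpow_pos_of_pos ht _
  have hfin : (2*π) ^ (α - 1) / t ^ α ≤ t ^ (1/q - 1) := by
    have h1 : (2*π) ^ (α - 1) ≤ 1 :=
      Real.rpow_le_one_of_one_le_of_nonpos (by linarith) (by rw [hα]; linarith)
    calc (2*π) ^ (α - 1) / t ^ α ≤ 1 / t ^ α := by gcongr
      _ = t ^ (-α) := by rw [Real.rpow_neg ht.le, one_div]
      _ = t ^ (1/q - 1) := by
          congr 1
          rw [hα]
          ring
  have hstep : N ^ α / (2*π*N) * min N (2*π/t) ≤ t ^ (1/q - 1) := by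
    rcases min_cases N (2*π/t) with ⟨hmin, hle⟩ | ⟨hmin, hlt⟩
    · rw [hmin]
      have e : N ^ α / (2*π*N) * N = N ^ α / (2*π) := by
        rw [div_mul_eq_mul_div, mul_comm (2*π) N, ← div_div, mul_div_assoc,
          div_self hN0.ne', mul_one]
      rw [e]
      have h2 : N ^ α ≤ (2*π/t) ^ α := Real.rpow_le_rpow hN0.le hle hα0.le
      have h3 : (2*π/t) ^ α = (2*π) ^ α / t ^ α := Real.div_rpow (by positivity) ht.le α
      calc N ^ α / (2*π) ≤ ((2*π) ^ α / t ^ α) / (2*π) := by rw [← h3]; gcongr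
        _ = (2*π) ^ (α - 1) / t ^ α := by
            rw [Real.rpow_sub_one (ne_of_gt (by positivity : (0:ℝ) < 2*π))]
            exact div_right_comm _ _ _
        _ ≤ t ^ (1/q - 1) := hfin
    · rw [hmin]
      have h2πt : 0 < 2*π/t := by positivity
      have hNα : N ^ (α - 1) ≤ (2*π/t) ^ (α - 1) :=
        Real.rpow_le_rpow_of_nonpos h2πt hlt.le (by rw [hα]; linarith)
      have hNβ : N ^ α = N ^ (α-1) * N := by
        nth_rewrite 3 [← Real.rpow_one N]
        rw [← Real.rpow_add hN0]
        congr 1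
        ring
      have e : N ^ α / (2*π*N) * (2*π/t) = N ^ (α - 1) / t := by
        rw [hNβ]
        field_simp
      rw [e]
      have h3 : (2*π/t) ^ (α - 1) = (2*π) ^ (α-1) / t ^ (α-1) :=
        Real.div_rpow (by positivity) ht.le _
      calc N ^ (α-1) / t ≤ ((2*π) ^ (α-1) / t ^ (α-1)) / t := by rw [← h3]; gcongr
        _ = (2*π) ^ (α-1) / t ^ α := by
            have htβ : t ^ (α-1) * t = t ^ α := by
              nth_rewrite 2 [← Real.rpow_one t]
              rw [← Real.rpow_add ht]
              congr 1
              ring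
            rw [div_div, htβ]
        _ ≤ _ := hfin
  calc k ^ α / (2*π*N) * min N (2*π/t) ≤ N ^ α / (2*π*N) * min N (2*π/t) := by gcongr
    _ ≤ _ := hstep


/-- For `1 < q < ∞` and `f ∈ L_{q,1}([-π,π])` with Fourier coefficients `a`,
the net-space norm bound `‖a‖_{n_{q',∞}} = sup_{k≥1} k^{1/q'} ã_k ≤ ‖f‖_{L_{q,1}}`
holds, where `1/q' = 1 - 1/q` and `‖f‖_{L_{q,1}} = ∫_0^{2π} t^{1/q-1} f*(t) dt`. -/
theorem net_norm_le_lorentz_norm (q : ℝ) (hq : 1 < q) (f : ℝ → ℂ)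
    (hf : IntegrableOn f (Set.Icc (-π) π))
    (hfq : IntegrableOn (fun t => decRearr f t * t ^ (1 / q - 1)) (Set.Ioc (0 : ℝ) (2 * π)))
    (a : ℤ → ℂ)
    (ha : ∀ m : ℤ, a m = (1 / (2 * (π : ℂ))) *
        ∫ x in (-π)..π, f x * Complex.exp (-Complex.I * (m : ℂ) * (x : ℂ))) :
    ∀ k : ℕ, 1 ≤ k →
      ENNReal.ofReal ((k : ℝ) ^ (1 - 1 / q)) * seqAvg a k ≤
        ENNReal.ofReal (∫ t in Set.Ioc (0 : ℝ) (2 * π), decRearr f t * t ^ (1 / q - 1)) := by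
  intro k hk
  have hπ := Real.pi_pos
  have hπ3 : (3:ℝ) < π := Real.pi_gt_three
  set ν : Measure ℝ := volume.restrict (Set.Icc (-π) π) with hνdef
  haveI : IsFiniteMeasure ν := ⟨by
    rw [hνdef, Measure.restrict_apply_univ, Real.volume_Icc]
    exact ENNReal.ofReal_lt_top⟩
  have hsm : AEStronglyMeasurable f ν := hf.aestronglyMeasurable
  set g' : ℝ → ℝ := fun x => ‖hsm.mk f x‖ with hg'def
  have hg : Measurable g' := hsm.stronglyMeasurable_mk.norm.measurable
  have hg0 : ∀ x, 0 ≤ g' x := fun x => norm_nonneg _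
  have hgg : ∀ᵐ x ∂ν, ‖f x‖ = g' x := hsm.ae_eq_mk.mono fun x hx => by
    rw [hg'def]
    simp only
    rw [hx]
  have hvol : ∀ σ : ℝ, volume {x ∈ Set.Icc (-π) π | σ < ‖f x‖} = ν {x | σ < g' x} := by
    intro σ
    have h1 : volume {x ∈ Set.Icc (-π) π | σ < ‖f x‖} = ν {x | σ < ‖f x‖} := by
      rw [hνdef, Measure.restrict_apply' measurableSet_Icc]
      congr 1
      ext x
      simp only [Set.mem_setOf_eq, Set.mem_inter_iff, Set.mem_sep_iff]
      tauto
    rw [h1]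
    refine measure_congr (Filter.eventuallyEq_set.mpr ?_)
    filter_upwards [hgg] with x hx
    simp only [Set.mem_setOf_eq, hx]
  have hFdef : ∀ t, decRearr f t
      = sInf {σ : ℝ | 0 ≤ σ ∧ ν {x | σ < g' x} ≤ ENNReal.ofReal t} := by
    intro t
    rw [decRearr]
    congr 1
    ext σ
    simp only [Set.mem_setOf_eq, hvol σ]
  have hfin : ∫⁻ x, ENNReal.ofReal (g' x) ∂ν ≠ ⊤ := by
    have h1 : ∫⁻ x, ENNReal.ofReal (g' x) ∂ν = ∫⁻ x, ENNReal.ofReal ‖f x‖ ∂ν :=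
      lintegral_congr_ae (hgg.mono fun x hx => by simp only; rw [hx])
    rw [h1]
    simp_rw [ofReal_norm]
    exact hf.2.ne
  -- unfold the supremum
  rw [seqAvg, ENNReal.mul_iSup]
  refine iSup_le fun l => ?_
  rw [ENNReal.mul_iSup]
  refine iSup_le fun m => ?_
  rw [ENNReal.mul_iSup]
  refine iSup_le fun hkm => ?_
  set N : ℝ := (m : ℝ) + 1 with hNdef
  have hN1 : 1 ≤ N := by rw [hNdef]; push_cast; linarith [Nat.cast_nonneg (α := ℝ) m]
  have hk1 : (1:ℝ) ≤ (k:ℝ) := by exact_mod_cast hk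
  have hkN : (k:ℝ) ≤ N := by rw [hNdef]; exact_mod_cast hkm
  set K : ℝ → ℂ := fun x => ∑ j ∈ Finset.Icc l (l + (m:ℤ)),
    Complex.exp (-Complex.I * (j:ℂ) * (x:ℂ)) with hKdef
  have hKcont : Continuous K := by
    rw [hKdef]
    exact continuous_finset_sum _ fun j _ =>
      Complex.continuous_exp.comp (continuous_const.mul Complex.continuous_ofReal)
  have hcard : ((Finset.Icc l (l + (m:ℤ))).card : ℝ) = N := by
    rw [Int.card_Icc, hNdef]
    have : (l + (m:ℤ) + 1 - l).toNat = m + 1 := by omega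
    rw [this]
    push_cast
    ring
  have hKcard : ∀ x : ℝ, ‖K x‖ ≤ N := by
    intro x
    refine (norm_sum_le _ _).trans ?_
    rw [Finset.sum_congr rfl fun j _ => norm_exp_one j x, Finset.sum_const, nsmul_eq_mul, mul_one]
    exact le_of_eq hcard
  have hKb : ∀ x ∈ Set.Icc (-π) π, x ≠ 0 → ‖K x‖ ≤ min N (π/|x|) := by
    intro x hx hx0
    exact le_min (hKcard x) (kernel_bound l m hx hx0)
  -- integrability
  have hfIoc : IntegrableOn f (Set.Ioc (-π) π) := hf.mono_set Set.Ioc_subset_Icc_self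
  have hInt_e : ∀ j : ℤ, IntervalIntegrable
      (fun x : ℝ => f x * Complex.exp (-Complex.I * (j:ℂ) * (x:ℂ))) volume (-π) π := by
    intro j
    rw [intervalIntegrable_iff, Set.uIoc_of_le (by linarith : -π ≤ π)]
    have hcont : Continuous fun x : ℝ => Complex.exp (-Complex.I * (j:ℂ) * (x:ℂ)) :=
      Complex.continuous_exp.comp (continuous_const.mul Complex.continuous_ofReal)
    have h1 := hfIoc.bdd_mul hcont.aestronglyMeasurable (c := 1) (Filter.Eventually.of_forall fun x => (norm_exp_one j x).le)
    exact h1.congr (Filter.EventuallyEq.of_eq (funext fun x => mul_comm _ _))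
  have hfK : IntegrableOn (fun x => f x * K x) (Set.Ioc (-π) π) := by
    have h1 := hfIoc.bdd_mul hKcont.aestronglyMeasurable (c := N) (Filter.Eventually.of_forall hKcard)
    exact h1.congr (Filter.EventuallyEq.of_eq (funext fun x => mul_comm _ _))
  -- sum identity
  have hsum : (∑ j ∈ Finset.Icc l (l + (m:ℤ)), a j)
      = (1 / (2 * (π:ℂ))) * ∫ x in (-π)..π, f x * K x := by
    calc ∑ j ∈ Finset.Icc l (l + (m:ℤ)), a j
        = ∑ j ∈ Finset.Icc l (l + (m:ℤ)), (1 / (2 * (π:ℂ))) *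
            ∫ x in (-π)..π, f x * Complex.exp (-Complex.I * (j:ℂ) * (x:ℂ)) :=
          Finset.sum_congr rfl fun j _ => ha j
      _ = (1 / (2 * (π:ℂ))) * ∑ j ∈ Finset.Icc l (l + (m:ℤ)),
            ∫ x in (-π)..π, f x * Complex.exp (-Complex.I * (j:ℂ) * (x:ℂ)) :=
          (Finset.mul_sum _ _ _).symm
      _ = (1 / (2 * (π:ℂ))) * ∫ x in (-π)..π, ∑ j ∈ Finset.Icc l (l + (m:ℤ)),
            f x * Complex.exp (-Complex.I * (j:ℂ) * (x:ℂ)) := by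
          rw [intervalIntegral.integral_finset_sum (fun j _ => hInt_e j)]
      _ = (1 / (2 * (π:ℂ))) * ∫ x in (-π)..π, f x * K x := by
          congr 1
          refine intervalIntegral.integral_congr fun x _ => ?_
          rw [hKdef]
          simp only
          rw [Finset.mul_sum]
  set INorm : ℝ := ∫ x in (-π)..π, ‖f x * K x‖ with hINdef
  have hINorm0 : 0 ≤ INorm :=
    intervalIntegral.integral_nonneg (by linarith) (fun u _ => norm_nonneg _)
  have hSle : ‖∑ j ∈ Finset.Icc l (l + (m:ℤ)), a j‖ ≤ (1/(2*π)) * INorm := by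
    rw [hsum, norm_mul]
    have hn : ‖1 / (2 * (π:ℂ))‖ = 1/(2*π) := by
      rw [norm_div, norm_one]
      have h2 : (2 * (π:ℂ)) = (((2*π:ℝ)):ℂ) := by push_cast; ring
      rw [h2, Complex.norm_real, Real.norm_eq_abs, abs_of_pos (by positivity)]
    rw [hn]
    exact mul_le_mul_of_nonneg_left
      (intervalIntegral.norm_integral_le_integral_norm (by linarith)) (by positivity)
  have hIeq : ENNReal.ofReal INorm
      = ∫⁻ x in Set.Ioc (-π) π, ENNReal.ofReal ‖f x * K x‖ ∂volume := by
    rw [hINdef, intervalIntegral.integral_of_le (by linarith : -π ≤ π)]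
    exact ofReal_integral_eq_lintegral_ofReal hfK.norm (Filter.Eventually.of_forall
      fun x => norm_nonneg _)
  have h0ae : ∀ᵐ x ∂ν, x ≠ (0:ℝ) := by
    rw [ae_iff]
    have hset : {x : ℝ | ¬ x ≠ 0} = {(0:ℝ)} := by ext x; simp
    rw [hset, hνdef, Measure.restrict_apply' measurableSet_Icc]
    exact measure_mono_null Set.inter_subset_left (measure_singleton 0)
  have hLle : ∫⁻ x in Set.Ioc (-π) π, ENNReal.ofReal ‖f x * K x‖ ∂volume
      ≤ ∫⁻ x, ENNReal.ofReal (g' x) * ENNReal.ofReal (min N (π/|x|)) ∂ν := by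
    have hres : ∫⁻ x in Set.Ioc (-π) π, ENNReal.ofReal ‖f x * K x‖ ∂volume
        ≤ ∫⁻ x, ENNReal.ofReal ‖f x * K x‖ ∂ν := by
      rw [hνdef]
      exact lintegral_mono' (Measure.restrict_mono Set.Ioc_subset_Icc_self le_rfl) le_rfl
    refine hres.trans (lintegral_mono_ae ?_)
    have hIccae : ∀ᵐ x ∂ν, x ∈ Set.Icc (-π) π := by
      rw [hνdef]
      exact ae_restrict_mem measurableSet_Icc
    filter_upwards [hgg, hIccae, h0ae] with x hx hmem hne
    rw [norm_mul, ← ENNReal.ofReal_mul (hg0 x), ← hx]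
    exact ENNReal.ofReal_le_ofReal
      (mul_le_mul_of_nonneg_left (hKb x hmem hne) (norm_nonneg _))
  have hw := weighted_rearr (ν := ν) hFdef hg hg0 hfin hN1
    (fun {σ} h1 h2 => by rw [hνdef]; exact measure_Aσ h1 h2)
  -- final comparison
  set c : ℝ≥0∞ := ENNReal.ofReal ((k:ℝ)^(1-1/q) / (2*π*N)) with hcdef
  have hnonneg_ae : 0 ≤ᵐ[volume.restrict (Set.Ioc (0:ℝ) (2*π))]
      fun t => decRearr f t * t ^ (1/q - 1) := by
    filter_upwards [ae_restrict_mem measurableSet_Ioc] with t ht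
    exact mul_nonneg (F_nonneg hFdef t) (Real.rpow_nonneg ht.1.le _)
  have hfinal : c * ∫⁻ t in Set.Ioc (0:ℝ) (2*π),
        ENNReal.ofReal (decRearr f t) * ENNReal.ofReal (min N (2*π/t)) ∂volume
      ≤ ENNReal.ofReal (∫ t in Set.Ioc (0:ℝ) (2*π), decRearr f t * t ^ (1/q - 1)) := by
    rw [ofReal_integral_eq_lintegral_ofReal hfq hnonneg_ae,
      ← lintegral_const_mul' _ _ ENNReal.ofReal_ne_top]
    refine lintegral_mono_ae ?_
    filter_upwards [ae_restrict_mem measurableSet_Ioc] with t ht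
    have hFt : 0 ≤ decRearr f t := F_nonneg hFdef t
    calc ENNReal.ofReal ((k:ℝ)^(1-1/q) / (2*π*N)) *
          (ENNReal.ofReal (decRearr f t) * ENNReal.ofReal (min N (2*π/t)))
        = ENNReal.ofReal (decRearr f t) *
            (ENNReal.ofReal ((k:ℝ)^(1-1/q) / (2*π*N)) * ENNReal.ofReal (min N (2*π/t))) := by
          ring
      _ = ENNReal.ofReal (decRearr f t) *
            ENNReal.ofReal ((k:ℝ)^(1-1/q) / (2*π*N) * min N (2*π/t)) := by
          rw [ENNReal.ofReal_mul (by positivity)]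
      _ ≤ ENNReal.ofReal (decRearr f t) * ENNReal.ofReal (t ^ (1/q - 1)) :=
          mul_le_mul_right (ENNReal.ofReal_le_ofReal
            (key_ineq hq hk1 hkN ht.1 ht.2)) _
      _ = ENNReal.ofReal (decRearr f t * t ^ (1/q - 1)) :=
          (ENNReal.ofReal_mul hFt).symm
  -- assemble
  have hstep1 : ENNReal.ofReal ((k:ℝ) ^ (1 - 1/q)) *
      ENNReal.ofReal (‖∑ j ∈ Finset.Icc l (l + (m:ℤ)), a j‖ / ((m:ℝ) + 1))
      ≤ c * ENNReal.ofReal INorm := by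
    have hN0 : (0:ℝ) < N := by linarith
    rw [← ENNReal.ofReal_mul (Real.rpow_nonneg (by positivity) _), hcdef,
      ← ENNReal.ofReal_mul (by positivity)]
    refine ENNReal.ofReal_le_ofReal ?_
    rw [← hNdef]
    have h2 := mul_le_mul_of_nonneg_left hSle
      (by positivity : (0:ℝ) ≤ (k:ℝ)^(1-1/q) / N)
    calc (k:ℝ)^(1-1/q) * (‖∑ j ∈ Finset.Icc l (l + (m:ℤ)), a j‖ / N)
        = ((k:ℝ)^(1-1/q) / N) * ‖∑ j ∈ Finset.Icc l (l + (m:ℤ)), a j‖ := by ring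
      _ ≤ ((k:ℝ)^(1-1/q) / N) * (1/(2*π) * INorm) := h2
      _ = (k:ℝ)^(1-1/q) / (2*π*N) * INorm := by
          clear_value N INorm
          field_simp
  calc ENNReal.ofReal ((k:ℝ) ^ (1 - 1/q)) *
      ENNReal.ofReal (‖∑ j ∈ Finset.Icc l (l + (m:ℤ)), a j‖ / ((m:ℝ) + 1))
      ≤ c * ENNReal.ofReal INorm := hstep1
    _ = c * ∫⁻ x in Set.Ioc (-π) π, ENNReal.ofReal ‖f x * K x‖ ∂volume := by rw [hIeq]
    _ ≤ c * ∫⁻ x, ENNReal.ofReal (g' x) * ENNReal.ofReal (min N (π/|x|)) ∂ν :=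
        mul_le_mul_right hLle c
    _ ≤ c * ∫⁻ t in Set.Ioc (0:ℝ) (2*π),
          ENNReal.ofReal (decRearr f t) * ENNReal.ofReal (min N (2*π/t)) ∂volume :=
        mul_le_mul_right hw c
    _ ≤ _ := hfinal
end

section
/- Let 1 < p < ∞ and let f have Fourier series ∑_{k∈ℤ} a_k e^{ikx} with only finitely many nonzero coefficients, and define I_p(f) = (∑_{k=0}^∞ (2^{k/p'} Θ_k(f))^p)^{1/p} where Θ_k(f) = ∑_{⌊2^{k−1}⌋ ≤ |m| < 2^k} |Δa_m|. For N ∈ ℕ let S_N(f) = ∑_{m=−2^N}^{2^N} a_m e^{imx}. Then I_p(S_N(f)) ≤ 2^{1/p'} I_p(f). -/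
open scoped ENNReal BigOperators

/-- The symmetric difference `|Δa_m|`: `|a_m - a_{m+1}|` for `m > 0`,
`|a_m - a_{m-1}|` for `m < 0`, and `|a_0 - a_1| + |a_0 - a_{-1}|` for `m = 0`. -/
noncomputable def symDiff (a : ℤ → ℂ) (m : ℤ) : ℝ :=
  if 0 < m then ‖a m - a (m + 1)‖
  else if m < 0 then ‖a m - a (m - 1)‖
  else ‖a 0 - a 1‖ + ‖a 0 - a (-1)‖

/-- `⌊2^{k-1}⌋`: equals `2^{k-1}` for `k ≥ 1` and `0` for `k = 0`. -/
def dyadLo (k : ℕ) : ℤ := if k = 0 then 0 else 2 ^ (k - 1)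

/-- `Θ_k(a) = ∑_{⌊2^{k-1}⌋ ≤ |m| < 2^k} |Δa_m|`. -/
noncomputable def Theta (a : ℤ → ℂ) (k : ℕ) : ℝ :=
  ∑ m ∈ (Finset.Icc (-(2 ^ k : ℤ) + 1) ((2 ^ k : ℤ) - 1)).filter
      (fun m => dyadLo k ≤ |m|), symDiff a m

/-- `I_p(a) = (∑_{k≥0} (2^{k/p'} Θ_k(a))^p)^{1/p}` with `1/p' = 1 - 1/p`. -/
noncomputable def Ip (p : ℝ) (a : ℤ → ℂ) : ℝ≥0∞ :=
  (∑' k : ℕ, (ENNReal.ofReal ((2 : ℝ) ^ ((k : ℝ) * (1 - 1 / p)) * Theta a k)) ^ p) ^ (1 / p)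

lemma symDiff_nonneg (a : ℤ → ℂ) (m : ℤ) : 0 ≤ symDiff a m := by
  unfold symDiff; split_ifs <;> positivity

lemma theta_nonneg (a : ℤ → ℂ) (k : ℕ) : 0 ≤ Theta a k :=
  Finset.sum_nonneg fun m _ => symDiff_nonneg a m

lemma telescope_pos (a : ℤ → ℂ) (c : ℤ) :
    ∀ d : ℤ, c ≤ d → ‖a c‖ ≤ ‖a (d + 1)‖ + ∑ m ∈ Finset.Icc c d, ‖a m - a (m + 1)‖ := by
  refine Int.le_induction ?_ ?_
  · rw [Finset.Icc_self, Finset.sum_singleton]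
    calc ‖a c‖ = ‖a (c+1) + (a c - a (c+1))‖ := by ring_nf
    _ ≤ ‖a (c+1)‖ + ‖a c - a (c+1)‖ := norm_add_le _ _
  · intro d hd ih
    have hins : Finset.Icc c (d+1) = insert (d+1) (Finset.Icc c d) := by
      ext x; simp [Finset.mem_Icc]; omega
    rw [hins, Finset.sum_insert (by simp [Finset.mem_Icc])]
    have : ‖a (d+1)‖ ≤ ‖a (d+1+1)‖ + ‖a (d+1) - a (d+1+1)‖ := by
      calc ‖a (d+1)‖ = ‖a (d+1+1) + (a (d+1) - a (d+1+1))‖ := by ring_nf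
      _ ≤ _ := norm_add_le _ _
    linarith

lemma telescope_neg (a : ℤ → ℂ) (c : ℤ) :
    ∀ d : ℤ, d ≤ c → ‖a c‖ ≤ ‖a (d - 1)‖ + ∑ m ∈ Finset.Icc d c, ‖a m - a (m - 1)‖ := by
  refine Int.le_induction_down ?_ ?_
  · rw [Finset.Icc_self, Finset.sum_singleton]
    calc ‖a c‖ = ‖a (c-1) + (a c - a (c-1))‖ := by ring_nf
    _ ≤ ‖a (c-1)‖ + ‖a c - a (c-1)‖ := norm_add_le _ _
  · intro d hd ih
    have hins : Finset.Icc (d-1) c = insert (d-1) (Finset.Icc d c) := by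
      ext x; simp [Finset.mem_Icc]; omega
    rw [hins, Finset.sum_insert (by simp [Finset.mem_Icc])]
    have : ‖a (d-1)‖ ≤ ‖a (d-1-1)‖ + ‖a (d-1) - a (d-1-1)‖ := by
      calc ‖a (d-1)‖ = ‖a (d-1-1) + (a (d-1) - a (d-1-1))‖ := by ring_nf
      _ ≤ _ := norm_add_le _ _
    linarith

lemma theta_split (a : ℤ → ℂ) (k : ℕ) :
    Theta a (k+1) = (∑ m ∈ Finset.Icc (-(2^(k+1) : ℤ) + 1) (-(2^k : ℤ)), ‖a m - a (m - 1)‖)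
      + ∑ m ∈ Finset.Icc ((2^k : ℤ)) ((2^(k+1) : ℤ) - 1), ‖a m - a (m + 1)‖ := by
  have h2k : (1 : ℤ) ≤ 2^k := by exact one_le_pow₀ one_le_two
  have hset : (Finset.Icc (-(2 ^ (k+1) : ℤ) + 1) ((2 ^ (k+1) : ℤ) - 1)).filter
      (fun m => dyadLo (k+1) ≤ |m|) =
      (Finset.Icc (-(2^(k+1) : ℤ) + 1) (-(2^k : ℤ))) ∪
      (Finset.Icc ((2^k : ℤ)) ((2^(k+1) : ℤ) - 1)) := by
    ext x
    simp only [Finset.mem_filter, Finset.mem_Icc, Finset.mem_union, dyadLo,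
      Nat.succ_ne_zero, if_false, Nat.add_sub_cancel, le_abs]
    omega
  have hdisj : Disjoint (Finset.Icc (-(2^(k+1) : ℤ) + 1) (-(2^k : ℤ)))
      (Finset.Icc ((2^k : ℤ)) ((2^(k+1) : ℤ) - 1)) := by
    rw [Finset.disjoint_left]
    intro x hx hx'
    simp only [Finset.mem_Icc] at hx hx'
    omega
  rw [Theta, hset, Finset.sum_union hdisj]
  congr 1
  · refine Finset.sum_congr rfl fun m hm => ?_
    simp only [Finset.mem_Icc] at hm
    rw [symDiff, if_neg (by omega), if_pos (by omega)]
  · refine Finset.sum_congr rfl fun m hm => ?_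
    simp only [Finset.mem_Icc] at hm
    rw [symDiff, if_pos (by omega)]

lemma phi_step (a : ℤ → ℂ) (k : ℕ) :
    ‖a ((2^k : ℤ))‖ + ‖a (-(2^k : ℤ))‖ ≤
      (‖a ((2^(k+1) : ℤ))‖ + ‖a (-(2^(k+1) : ℤ))‖) + Theta a (k+1) := by
  have h2k : (1 : ℤ) ≤ 2^k := one_le_pow₀ one_le_two
  have h2k1 : (2^k : ℤ) ≤ 2^(k+1) - 1 := by
    have : (2^(k+1) : ℤ) = 2 * 2^k := by ring
    omega
  have hpos := telescope_pos a ((2^k : ℤ)) ((2^(k+1) : ℤ) - 1) h2k1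
  have hneg := telescope_neg a (-(2^k : ℤ)) (-(2^(k+1) : ℤ) + 1) (by omega)
  rw [theta_split]
  have e1 : ((2^(k+1) : ℤ) - 1) + 1 = (2^(k+1) : ℤ) := by ring
  have e2 : (-(2^(k+1) : ℤ) + 1) - 1 = -(2^(k+1) : ℤ) := by ring
  rw [e1] at hpos
  rw [e2] at hneg
  linarith

lemma phi_tail (a : ℤ → ℂ) (N : ℕ) :
    ∀ M, N ≤ M → ‖a ((2^N : ℤ))‖ + ‖a (-(2^N : ℤ))‖ ≤
      (‖a ((2^M : ℤ))‖ + ‖a (-(2^M : ℤ))‖) + ∑ k ∈ Finset.Icc (N+1) M, Theta a k := by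
  refine Nat.le_induction ?_ ?_
  · simp
  · intro M hM ih
    have hins : Finset.Icc (N+1) (M+1) = insert (M+1) (Finset.Icc (N+1) M) := by
      ext x; simp [Finset.mem_Icc]; omega
    rw [hins, Finset.sum_insert (by simp [Finset.mem_Icc])]
    have := phi_step a M
    linarith

section trunc
variable (a : ℤ → ℂ) (N : ℕ)

lemma theta_trunc_eq {k : ℕ} (hk : k ≤ N) :
    Theta (fun m => if |m| ≤ (2 ^ N : ℤ) then a m else 0) k = Theta a k := by
  have hkN : (2^k : ℤ) ≤ 2^N := pow_le_pow_right₀ one_le_two hk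
  have h1 : (1 : ℤ) ≤ 2^k := one_le_pow₀ one_le_two
  have h1N : (1 : ℤ) ≤ 2^N := one_le_pow₀ one_le_two
  refine Finset.sum_congr rfl fun m hm => ?_
  simp only [Finset.mem_filter, Finset.mem_Icc] at hm
  obtain ⟨⟨hm1, hm2⟩, -⟩ := hm
  rcases lt_trichotomy 0 m with h | h | h
  · rw [symDiff, symDiff, if_pos h, if_pos h,
      if_pos (show |m| ≤ (2^N : ℤ) by rw [abs_of_pos h]; omega),
      if_pos (show |m + 1| ≤ (2^N : ℤ) by rw [abs_of_pos (by omega)]; omega)]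
  · subst h
    rw [symDiff, symDiff]
    norm_num [h1N]
  · have h0 : ¬ (0:ℤ) < m := by omega
    rw [symDiff, symDiff, if_neg h0, if_neg h0, if_pos h, if_pos h,
      if_pos (show |m| ≤ (2^N : ℤ) by rw [abs_of_neg h]; omega),
      if_pos (show |m - 1| ≤ (2^N : ℤ) by rw [abs_of_neg (by omega)]; omega)]

lemma theta_trunc_succ :
    Theta (fun m => if |m| ≤ (2 ^ N : ℤ) then a m else 0) (N+1) ≤
      ‖a ((2^N : ℤ))‖ + ‖a (-(2^N : ℤ))‖ := by
  have h1N : (1 : ℤ) ≤ 2^N := one_le_pow₀ one_le_two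
  have key : ∀ m ∈ (Finset.Icc (-(2 ^ (N+1) : ℤ) + 1) ((2 ^ (N+1) : ℤ) - 1)).filter
      (fun m => dyadLo (N+1) ≤ |m|),
      symDiff (fun m => if |m| ≤ (2 ^ N : ℤ) then a m else 0) m =
      (if m = (2^N : ℤ) then ‖a ((2^N : ℤ))‖ else 0)
        + (if m = -(2^N : ℤ) then ‖a (-(2^N : ℤ))‖ else 0) := by
    intro m hm
    simp only [Finset.mem_filter, Finset.mem_Icc, dyadLo, Nat.succ_ne_zero, if_false,
      Nat.add_sub_cancel, le_abs] at hm
    obtain ⟨⟨hm1, hm2⟩, hm3⟩ := hm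
    rcases eq_or_ne m ((2^N : ℤ)) with rfl | hne
    · rw [if_pos rfl, if_neg (by omega), symDiff, if_pos (by omega),
        if_pos (show |(2^N : ℤ)| ≤ 2^N by rw [abs_of_pos (by omega)]),
        if_neg (show ¬ |(2^N : ℤ) + 1| ≤ 2^N by rw [abs_of_pos (by omega)]; omega)]
      simp
    rcases eq_or_ne m (-(2^N : ℤ)) with rfl | hne'
    · rw [if_neg hne, if_pos rfl, symDiff, if_neg (by omega), if_pos (by omega),
        if_pos (show |(-(2^N : ℤ))| ≤ 2^N by rw [abs_neg, abs_of_pos (by omega)]),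
        if_neg (show ¬ |(-(2^N : ℤ)) - 1| ≤ 2^N by rw [abs_of_neg (by omega)]; omega)]
      simp
    · rw [if_neg hne, if_neg hne']
      rcases lt_trichotomy 0 m with h | h | h
      · have hgt : 2^N < m := by omega
        rw [symDiff, if_pos h,
          if_neg (show ¬ |m| ≤ (2^N : ℤ) by rw [abs_of_pos h]; omega),
          if_neg (show ¬ |m + 1| ≤ (2^N : ℤ) by rw [abs_of_pos (by omega)]; omega)]
        simp
      · omega
      · have hlt : m < -(2^N : ℤ) := by omega
        rw [symDiff, if_neg (by omega), if_pos h,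
          if_neg (show ¬ |m| ≤ (2^N : ℤ) by rw [abs_of_neg h]; omega),
          if_neg (show ¬ |m - 1| ≤ (2^N : ℤ) by rw [abs_of_neg (by omega)]; omega)]
        simp
  rw [Theta, Finset.sum_congr rfl key, Finset.sum_add_distrib,
    Finset.sum_ite_eq' _ ((2^N : ℤ)) (fun _ => ‖a ((2^N : ℤ))‖),
    Finset.sum_ite_eq' _ (-(2^N : ℤ)) (fun _ => ‖a (-(2^N : ℤ))‖)]
  split_ifs <;> simp [norm_nonneg] <;> positivity


lemma theta_trunc_zero {k : ℕ} (hk : N + 2 ≤ k) :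
    Theta (fun m => if |m| ≤ (2 ^ N : ℤ) then a m else 0) k = 0 := by
  have h1N : (1 : ℤ) ≤ 2^N := one_le_pow₀ one_le_two
  have hpow : (2^(N+1) : ℤ) ≤ 2^(k-1) := pow_le_pow_right₀ one_le_two (by omega)
  have h2N1 : (2^(N+1) : ℤ) = 2 * 2^N := by ring
  refine Finset.sum_eq_zero fun m hm => ?_
  simp only [Finset.mem_filter, Finset.mem_Icc, dyadLo,
    show k ≠ 0 by omega, if_false, le_abs] at hm
  obtain ⟨⟨hm1, hm2⟩, hm3⟩ := hm
  rcases lt_trichotomy 0 m with h | h | h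
  · have hgt : 2^N < m := by omega
    rw [symDiff, if_pos h,
      if_neg (show ¬ |m| ≤ (2^N : ℤ) by rw [abs_of_pos h]; omega),
      if_neg (show ¬ |m + 1| ≤ (2^N : ℤ) by rw [abs_of_pos (by omega)]; omega)]
    simp
  · omega
  · have hlt : m < -(2^N : ℤ) := by omega
    rw [symDiff, if_neg (by omega), if_pos h,
      if_neg (show ¬ |m| ≤ (2^N : ℤ) by rw [abs_of_neg h]; omega),
      if_neg (show ¬ |m - 1| ≤ (2^N : ℤ) by rw [abs_of_neg (by omega)]; omega)]
    simp

end trunc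

lemma geom_tail (N : ℕ) : ∀ M, N ≤ M → ∑ k ∈ Finset.Icc (N+1) M, ((1/2:ℝ))^k ≤ (1/2)^N := by
  have key : ∀ M, N ≤ M → ∑ k ∈ Finset.Icc (N+1) M, ((1/2:ℝ))^k = (1/2)^N - (1/2)^M := by
    refine Nat.le_induction ?_ ?_
    · simp
    · intro M hM ih
      have hins : Finset.Icc (N+1) (M+1) = insert (M+1) (Finset.Icc (N+1) M) := by
        ext x; simp [Finset.mem_Icc]; omega
      rw [hins, Finset.sum_insert (by simp [Finset.mem_Icc]), ih, pow_succ]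
      ring
  intro M hM
  rw [key M hM]
  have : (0:ℝ) ≤ (1/2)^M := by positivity
  linarith


/-- For a trigonometric polynomial `f` with coefficients `a` (finitely many
nonzero) and partial sum `S_N(f)` with coefficients `a_m` for `|m| ≤ 2^N`,
one has `I_p(S_N(f)) ≤ 2^{1/p'} I_p(f)`. -/
theorem Ip_partial_sum_le (p : ℝ) (hp1 : 1 < p) (a : ℤ → ℂ)
    (hfin : (Function.support a).Finite) (N : ℕ) :
    Ip p (fun m => if |m| ≤ (2 ^ N : ℤ) then a m else 0) ≤
      ENNReal.ofReal ((2 : ℝ) ^ (1 - 1 / p)) * Ip p a := by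
  have hp0 : (0:ℝ) < p := by linarith
  have hp0' : p ≠ 0 := hp0.ne'
  set q : ℝ := p.conjExponent with hqdef
  have hpq : p.HolderConjugate q := Real.HolderConjugate.conjExponent hp1
  have hq0 : 0 < q := hpq.symm.pos
  have h1q : 1 - 1/p = 1/q := by
    have := hpq.inv_add_inv_eq_one
    rw [one_div, one_div]
    linarith
  have hqinv : (1 - 1/p) * q = 1 := by
    rw [h1q]
    field_simp
  -- choose M
  set C : ℕ := hfin.toFinset.sup (fun m => m.natAbs) with hCdef
  set M : ℕ := max (N+1) (C+1) with hMdef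
  have hM1 : N + 1 ≤ M := le_max_left _ _
  have haM : ∀ x : ℤ, (2^M : ℤ) ≤ |x| → a x = 0 := by
    intro x hx
    by_contra hax
    have hmem : x ∈ hfin.toFinset := by simpa [Set.Finite.mem_toFinset, Function.mem_support]
    have hle : x.natAbs ≤ C := Finset.le_sup (f := fun m => m.natAbs) hmem
    have h2 : (2:ℕ)^M ≤ x.natAbs := by
      have : ((2:ℕ)^M : ℤ) ≤ |x| := by push_cast at hx ⊢; exact hx
      rw [Int.abs_eq_natAbs] at this
      exact_mod_cast this
    have h3 : C < 2^(C+1) := (Nat.lt_two_pow_self (n := C)).trans (Nat.pow_lt_pow_right one_lt_two (by omega))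
    have h4 : (2:ℕ)^(C+1) ≤ 2^M := Nat.pow_le_pow_right (by norm_num) (le_max_right _ _)
    omega
  -- tail bound
  set T : ℝ := ∑ k ∈ Finset.Icc (N+1) M, Theta a k with hTdef
  have hT0 : 0 ≤ T := Finset.sum_nonneg fun k _ => theta_nonneg a k
  have hPhiT : ‖a ((2^N : ℤ))‖ + ‖a (-(2^N : ℤ))‖ ≤ T := by
    have h := phi_tail a N M (by omega)
    rw [haM ((2^M : ℤ)) (by rw [abs_of_pos (by positivity)]),
      haM (-(2^M : ℤ)) (by rw [abs_neg, abs_of_pos (by positivity)])] at h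
    simpa using h
  -- ENNReal part
  set b : ℤ → ℂ := fun m => if |m| ≤ (2 ^ N : ℤ) then a m else 0 with hbdef
  set F : ℕ → ℝ≥0∞ := fun k => ENNReal.ofReal ((2:ℝ)^((k:ℝ)*(1-1/p)) * Theta a k) with hFdef
  set G : ℕ → ℝ≥0∞ := fun k => ENNReal.ofReal ((2:ℝ)^((k:ℝ)*(1-1/p)) * Theta b k) with hGdef
  set w : ℕ → ℝ≥0∞ := fun k => ENNReal.ofReal ((2:ℝ)^(-((k:ℝ)*(1-1/p)))) with hwdef
  set c : ℝ≥0∞ := ENNReal.ofReal ((2:ℝ)^(1-(1:ℝ)/p)) with hcdef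
  show (∑' k : ℕ, G k ^ p) ^ (1/p) ≤ c * (∑' k : ℕ, F k ^ p) ^ (1/p)
  have hG_zero : ∀ k : ℕ, k ∉ Finset.range (N+2) → G k ^ p = 0 := by
    intro k hk
    simp only [Finset.mem_range, not_lt] at hk
    rw [hGdef]
    simp only []
    rw [hbdef, theta_trunc_zero a N (by omega), mul_zero, ENNReal.ofReal_zero,
      ENNReal.zero_rpow_of_pos hp0]
  have hsum : (∑' k : ℕ, G k ^ p) = (∑ k ∈ Finset.range (N+1), G k ^ p) + G (N+1) ^ p := by
    rw [tsum_eq_sum hG_zero, Finset.sum_range_succ]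
  have hGF : ∀ k ∈ Finset.range (N+1), G k ^ p = F k ^ p := by
    intro k hk
    simp only [Finset.mem_range] at hk
    rw [hGdef, hFdef]
    simp only []
    rw [hbdef, theta_trunc_eq a N (by omega)]
  have hwF : ∀ k : ℕ, ENNReal.ofReal (Theta a k) = w k * F k := by
    intro k
    rw [hwdef, hFdef]
    simp only []
    rw [← ENNReal.ofReal_mul (by positivity)]
    congr 1
    rw [Real.rpow_neg (by norm_num), inv_mul_cancel_left₀ (Real.rpow_pos_of_pos two_pos _).ne']
  have holder : ∑ k ∈ Finset.Icc (N+1) M, w k * F k ≤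
      (∑ k ∈ Finset.Icc (N+1) M, w k ^ q) ^ (1/q) *
        (∑ k ∈ Finset.Icc (N+1) M, F k ^ p) ^ (1/p) :=
    ENNReal.inner_le_Lp_mul_Lq _ w F hpq.symm
  have hwq : ∀ k : ℕ, w k ^ q = ENNReal.ofReal (((1:ℝ)/2)^k) := by
    intro k
    rw [hwdef]
    simp only []
    rw [ENNReal.ofReal_rpow_of_pos (Real.rpow_pos_of_pos two_pos _),
      ← Real.rpow_mul (by norm_num),
      show -((k:ℝ)*(1-1/p))*q = -(k:ℝ) by rw [neg_mul, mul_assoc, hqinv, mul_one],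
      Real.rpow_neg (by norm_num), Real.rpow_natCast, one_div, inv_pow]
  have hWq : (∑ k ∈ Finset.Icc (N+1) M, w k ^ q) ^ (1/q) ≤
      ENNReal.ofReal ((2:ℝ)^(-(N:ℝ)*(1-1/p))) := by
    have hW : (∑ k ∈ Finset.Icc (N+1) M, w k ^ q) ≤ ENNReal.ofReal (((1:ℝ)/2)^N) := by
      rw [Finset.sum_congr rfl (fun k _ => hwq k),
        ← ENNReal.ofReal_sum_of_nonneg (fun k _ => by positivity)]
      exact ENNReal.ofReal_le_ofReal (geom_tail N M (by omega))
    calc (∑ k ∈ Finset.Icc (N+1) M, w k ^ q) ^ (1/q)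
        ≤ (ENNReal.ofReal (((1:ℝ)/2)^N)) ^ (1/q) :=
          ENNReal.rpow_le_rpow hW (by positivity)
      _ = ENNReal.ofReal ((((1:ℝ)/2)^N) ^ (1/q)) :=
          ENNReal.ofReal_rpow_of_pos (by positivity)
      _ = ENNReal.ofReal ((2:ℝ)^(-(N:ℝ)*(1-1/p))) := by
          congr 1
          rw [show ((1:ℝ)/2)^N = (2:ℝ)^(-(N:ℝ)) by
              rw [Real.rpow_neg (by norm_num), Real.rpow_natCast, one_div, inv_pow],
            ← Real.rpow_mul (by norm_num)]
          congr 1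
          rw [h1q]
  have hGN1 : G (N+1) ≤ c * (∑ k ∈ Finset.Icc (N+1) M, F k ^ p) ^ (1/p) := by
    have hr : (0:ℝ) < (2:ℝ)^((((N:ℕ)+1:ℕ):ℝ)*(1-1/p)) := Real.rpow_pos_of_pos two_pos _
    calc G (N+1) ≤ ENNReal.ofReal ((2:ℝ)^((((N:ℕ)+1:ℕ):ℝ)*(1-1/p)) * T) := by
          rw [hGdef]
          simp only []
          apply ENNReal.ofReal_le_ofReal
          refine mul_le_mul_of_nonneg_left ?_ hr.le
          rw [hbdef]
          exact (theta_trunc_succ a N).trans hPhiT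
      _ = ENNReal.ofReal ((2:ℝ)^((((N:ℕ)+1:ℕ):ℝ)*(1-1/p))) *
            (∑ k ∈ Finset.Icc (N+1) M, ENNReal.ofReal (Theta a k)) := by
          rw [ENNReal.ofReal_mul hr.le, hTdef,
            ENNReal.ofReal_sum_of_nonneg (fun k _ => theta_nonneg a k)]
      _ = ENNReal.ofReal ((2:ℝ)^((((N:ℕ)+1:ℕ):ℝ)*(1-1/p))) *
            (∑ k ∈ Finset.Icc (N+1) M, w k * F k) := by
          rw [Finset.sum_congr rfl (fun k _ => hwF k)]
      _ ≤ ENNReal.ofReal ((2:ℝ)^((((N:ℕ)+1:ℕ):ℝ)*(1-1/p))) *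
            ((∑ k ∈ Finset.Icc (N+1) M, w k ^ q) ^ (1/q) *
              (∑ k ∈ Finset.Icc (N+1) M, F k ^ p) ^ (1/p)) := mul_le_mul_right holder _
      _ ≤ ENNReal.ofReal ((2:ℝ)^((((N:ℕ)+1:ℕ):ℝ)*(1-1/p))) *
            (ENNReal.ofReal ((2:ℝ)^(-(N:ℝ)*(1-1/p))) *
              (∑ k ∈ Finset.Icc (N+1) M, F k ^ p) ^ (1/p)) :=
          mul_le_mul_right (mul_le_mul_left hWq _) _
      _ = c * (∑ k ∈ Finset.Icc (N+1) M, F k ^ p) ^ (1/p) := by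
          rw [← mul_assoc, ← ENNReal.ofReal_mul hr.le, ← Real.rpow_add two_pos, hcdef,
            show (((N:ℕ)+1:ℕ):ℝ)*(1-1/p) + -(N:ℝ)*(1-1/p) = 1-(1:ℝ)/p by push_cast; ring]
  have hGN1p : G (N+1) ^ p ≤ c ^ p * ∑ k ∈ Finset.Icc (N+1) M, F k ^ p := by
    calc G (N+1) ^ p ≤ (c * (∑ k ∈ Finset.Icc (N+1) M, F k ^ p) ^ (1/p)) ^ p :=
          ENNReal.rpow_le_rpow hGN1 hp0.le
      _ = c ^ p * ((∑ k ∈ Finset.Icc (N+1) M, F k ^ p) ^ (1/p)) ^ p :=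
          ENNReal.mul_rpow_of_nonneg _ _ hp0.le
      _ = c ^ p * ∑ k ∈ Finset.Icc (N+1) M, F k ^ p := by
          rw [← ENNReal.rpow_mul, one_div_mul_cancel hp0', ENNReal.rpow_one]
  have hone : (1:ℝ≥0∞) ≤ c ^ p := by
    have h2 : (1:ℝ) ≤ (2:ℝ)^(1-(1:ℝ)/p) := by
      apply Real.one_le_rpow one_le_two
      have : 1/p ≤ 1 := by rw [div_le_one hp0]; linarith
      linarith
    calc (1:ℝ≥0∞) = 1 ^ p := (ENNReal.one_rpow p).symm
      _ ≤ c ^ p := ENNReal.rpow_le_rpow (by rw [hcdef]; exact ENNReal.one_le_ofReal.mpr h2) hp0.le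
  calc (∑' k : ℕ, G k ^ p) ^ (1/p)
      = ((∑ k ∈ Finset.range (N+1), G k ^ p) + G (N+1) ^ p) ^ (1/p) := by rw [hsum]
    _ ≤ ((∑ k ∈ Finset.range (N+1), F k ^ p) +
          c ^ p * ∑ k ∈ Finset.Icc (N+1) M, F k ^ p) ^ (1/p) :=
        ENNReal.rpow_le_rpow (add_le_add (le_of_eq (Finset.sum_congr rfl hGF)) hGN1p)
          (by positivity)
    _ ≤ (c ^ p * (∑ k ∈ Finset.range (N+1), F k ^ p) +
          c ^ p * ∑ k ∈ Finset.Icc (N+1) M, F k ^ p) ^ (1/p) :=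
        ENNReal.rpow_le_rpow (add_le_add_left (le_mul_of_one_le_left' hone) _) (by positivity)
    _ = (c ^ p * ∑ k ∈ Finset.range (M+1), F k ^ p) ^ (1/p) := by
        rw [← mul_add]
        congr 2
        rw [Finset.range_eq_Ico, Finset.range_eq_Ico,
          show Finset.Icc (N+1) M = Finset.Ico (N+1) (M+1) from (Finset.Ico_add_one_right_eq_Icc _ _).symm]
        exact Finset.sum_Ico_consecutive (fun k => F k ^ p) (Nat.zero_le _) (by omega)
    _ ≤ (c ^ p * ∑' k : ℕ, F k ^ p) ^ (1/p) :=
        ENNReal.rpow_le_rpow (mul_le_mul_right (ENNReal.sum_le_tsum _) _) (by positivity)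
    _ = c * (∑' k : ℕ, F k ^ p) ^ (1/p) := by
        rw [ENNReal.mul_rpow_of_nonneg _ _ (by positivity), ← ENNReal.rpow_mul,
          mul_one_div_cancel hp0', ENNReal.rpow_one]
end

section
/- Let 1 < p < ∞ and let {a_k}_{k∈ℤ} be a complex sequence with J_p(f) = (∑_{k∈ℤ} (|k|+1)^{p−2}|a_k|^p)^{1/p} < ∞. Define â_{2^r} = sup_{2^r ≤ |m| < 2^{r+1}} (1/(|m|+1))|∑_{s=0}^{m} a_s| and A_p(a) = (∑_{k=0}^∞ (2^{k/p'} sup_{r≥0} min(1,2^{r−k}) â_{2^r})^p)^{1/p}. Then A_p(a) ≤ C_p J_p(f). -/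
open scoped ENNReal BigOperators

/-- The partial sum `∑_{s=0}^{m} a_s`, interpreted as `∑_{s=m}^{0} a_s`
when `m < 0`. -/
noncomputable def psum (a : ℤ → ℂ) (m : ℤ) : ℂ :=
  ∑ j ∈ Finset.Icc (min m 0) (max m 0), a j

/-- `â_{2^r} = sup_{2^r ≤ |m| < 2^{r+1}} (1/(|m|+1)) |∑_{s=0}^{m} a_s|`. -/
noncomputable def hatAvg (a : ℤ → ℂ) (r : ℕ) : ℝ≥0∞ :=
  ⨆ (m : ℤ) (_ : (2 ^ r : ℤ) ≤ |m| ∧ |m| < 2 ^ (r + 1)),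
    ENNReal.ofReal (‖psum a m‖ / ((m.natAbs : ℝ) + 1))

namespace ApAux

lemma two_rpow_add (y z : ℝ) : (2 : ℝ≥0∞) ^ (y + z) = 2 ^ y * 2 ^ z :=
  ENNReal.rpow_add y z (by norm_num) (by norm_num)


/-- Geometric tail sum. -/
lemma tsum_ite_geo (y : ℝ≥0∞) (r0 : ℕ) :
    ∑' r : ℕ, (if r0 ≤ r then y ^ r else 0) = y ^ r0 * (1 - y)⁻¹ := by
  rw [← ENNReal.tsum_geometric, ← ENNReal.tsum_mul_left]
  have hinj : Function.Injective (fun s : ℕ => s + r0) := fun u v h => by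
    simpa using h
  rw [← Function.Injective.tsum_eq hinj
      (f := fun r : ℕ => if r0 ≤ r then y ^ r else 0) ?_]
  · refine tsum_congr fun s => ?_
    rw [if_pos (by omega), pow_add, mul_comm]
  · intro x hx
    rcases Function.mem_support.mp hx with h
    by_contra hc
    have hx0 : r0 ≤ x := by
      by_contra h2
      exact h (if_neg h2)
    exact hc ⟨x - r0, by show x - r0 + r0 = x; omega⟩

/-- Two-sided geometric bound. -/
lemma tsum_twoSided (z1 z2 : ℝ≥0∞) (r : ℕ) :
    ∑' k : ℕ, (if k ≤ r then z1 ^ (r - k) else z2 ^ (k - r)) ≤ (1 - z1)⁻¹ + (1 - z2)⁻¹ := by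
  have hle : ∀ k : ℕ, (if k ≤ r then z1 ^ (r - k) else z2 ^ (k - r)) ≤
      (if k ≤ r then z1 ^ (r - k) else 0) + (if r + 1 ≤ k then z2 ^ (k - r) else 0) := by
    intro k
    by_cases h : k ≤ r
    · simp [h, Nat.lt_succ_of_le h, (by omega : ¬ (r + 1 ≤ k))]
    · simp [h, (by omega : r + 1 ≤ k)]
  refine le_trans (ENNReal.tsum_le_tsum hle) ?_
  rw [ENNReal.tsum_add]
  refine add_le_add ?_ ?_
  · rw [tsum_eq_sum (s := Finset.range (r + 1))
      (by intro b hb; rw [if_neg]; simp at hb; omega)]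
    calc ∑ k ∈ Finset.range (r + 1), (if k ≤ r then z1 ^ (r - k) else 0)
        = ∑ k ∈ Finset.range (r + 1), z1 ^ (r - k) := by
          refine Finset.sum_congr rfl fun k hk => ?_
          rw [if_pos]; simp at hk; omega
      _ = ∑ k ∈ Finset.range (r + 1), z1 ^ k := by
          rw [← Finset.sum_range_reflect]
          refine Finset.sum_congr rfl fun k hk => ?_
          congr 1
          simp at hk; omega
      _ ≤ ∑' k : ℕ, z1 ^ k := ENNReal.sum_le_tsum _
      _ = (1 - z1)⁻¹ := ENNReal.tsum_geometric z1
  · have hinj : Function.Injective (fun s : ℕ => s + (r + 1)) := fun u v h => by simpa using h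
    rw [← Function.Injective.tsum_eq hinj
        (f := fun k : ℕ => if r + 1 ≤ k then z2 ^ (k - r) else 0) ?_]
    · calc ∑' s : ℕ, (if r + 1 ≤ s + (r + 1) then z2 ^ (s + (r + 1) - r) else 0)
          = ∑' s : ℕ, z2 ^ (s + 1) := by
            refine tsum_congr fun s => ?_
            rw [if_pos (by omega)]
            congr 1
            omega
        _ = z2 * (1 - z2)⁻¹ := ENNReal.tsum_geometric_add_one z2
        _ ≤ (1 - z2)⁻¹ := by
            by_cases h : z2 ≤ 1
            · calc z2 * (1 - z2)⁻¹ ≤ 1 * (1 - z2)⁻¹ := mul_le_mul_left h _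
                _ = (1 - z2)⁻¹ := one_mul _
            · have : (1 : ℝ≥0∞) - z2 = 0 := tsub_eq_zero_of_le (le_of_not_ge h)
              simp [this]
    · intro x hx
      by_contra hc
      have : r + 1 ≤ x := by
        by_contra h2
        exact (Function.mem_support.mp hx) (if_neg h2)
      exact hc ⟨x - (r + 1), by show x - (r + 1) + (r + 1) = x; omega⟩



/-- Power sum estimate: `∑_{n<N} (n+1)^{-α} ≤ C (N)^{1-α}` for `α < 1`. -/
lemma sumP {α : ℝ} (hα : α < 1) (N : ℕ) :
    ∑ n ∈ Finset.range N, ((n : ℝ) + 1) ^ (-α) ≤ (1 / (1 - α) + 1) * (N : ℝ) ^ (1 - α) := by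
  have h1α : 0 < 1 - α := by linarith
  have hC1 : (1 : ℝ) ≤ 1 / (1 - α) + 1 := by
    have : 0 < 1 / (1 - α) := by positivity
    linarith
  by_cases hα0 : α ≤ 0
  · -- each term ≤ N^{-α}
    rcases Nat.eq_zero_or_pos N with rfl | hN
    · simp
      positivity
    have hterm : ∀ n ∈ Finset.range N, ((n : ℝ) + 1) ^ (-α) ≤ (N : ℝ) ^ (-α) := by
      intro n hn
      have hn' : (n : ℝ) + 1 ≤ (N : ℝ) := by
        have := Finset.mem_range.mp hn
        exact_mod_cast Nat.succ_le_of_lt this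
      exact Real.rpow_le_rpow (by positivity) hn' (by linarith)
    calc ∑ n ∈ Finset.range N, ((n : ℝ) + 1) ^ (-α)
        ≤ ∑ _n ∈ Finset.range N, (N : ℝ) ^ (-α) := Finset.sum_le_sum hterm
      _ = (N : ℝ) * (N : ℝ) ^ (-α) := by
          rw [Finset.sum_const, Finset.card_range, nsmul_eq_mul]
      _ = (N : ℝ) ^ (1 - α) := by
          rw [sub_eq_add_neg, Real.rpow_add (by exact_mod_cast hN), Real.rpow_one]
      _ ≤ (1 / (1 - α) + 1) * (N : ℝ) ^ (1 - α) := by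
          nlinarith [Real.rpow_nonneg (by positivity : (0:ℝ) ≤ (N:ℝ)) (1 - α)]
  · push_neg at hα0
    -- induction
    induction N with
    | zero => simp [Real.zero_rpow (by linarith : 1 - α ≠ 0)]
    | succ N ih =>
      rw [Finset.sum_range_succ]
      have key : (N : ℝ) ^ (1 - α) * ((N : ℝ) + 1) ^ α ≤ (1 - α) * N + α * ((N : ℝ) + 1) :=
        Real.geom_mean_le_arith_mean2_weighted (by linarith) (le_of_lt hα0)
          (by positivity) (by positivity) (by ring)
      have hpos : (0 : ℝ) < (N : ℝ) + 1 := by positivity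
      have hNp : (N : ℝ) ^ (1 - α) ≤ ((N : ℝ) + α) * ((N : ℝ) + 1) ^ (-α) := by
        have h2 : (N : ℝ) ^ (1 - α) = (N : ℝ) ^ (1 - α) * ((N : ℝ) + 1) ^ α * ((N : ℝ) + 1) ^ (-α) := by
          rw [mul_assoc, ← Real.rpow_add hpos]
          simp
        rw [h2]
        have : (1 - α) * N + α * ((N : ℝ) + 1) = (N : ℝ) + α := by ring
        refine mul_le_mul_of_nonneg_right ?_ (by positivity)
        rw [← this]; exact key
      have hdiff : (1 - α) * ((N : ℝ) + 1) ^ (-α) ≤ ((N : ℝ) + 1) ^ (1 - α) - (N : ℝ) ^ (1 - α) := by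
        have hexp : ((N : ℝ) + 1) ^ (1 - α) = ((N : ℝ) + 1) * ((N : ℝ) + 1) ^ (-α) := by
          rw [sub_eq_add_neg, Real.rpow_add hpos, Real.rpow_one]
        rw [hexp]
        nlinarith [hNp]
      have hterm : ((N : ℝ) + 1) ^ (-α) ≤ (1 / (1 - α) + 1) * (((N : ℝ) + 1) ^ (1 - α) - (N : ℝ) ^ (1 - α)) := by
        have h3 : ((N : ℝ) + 1) ^ (-α) ≤ (1 / (1 - α)) * (((N : ℝ) + 1) ^ (1 - α) - (N : ℝ) ^ (1 - α)) := by
          rw [div_mul_eq_mul_div, le_div_iff₀ h1α, one_mul]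
          calc ((N : ℝ) + 1) ^ (-α) * (1 - α) = (1 - α) * ((N : ℝ) + 1) ^ (-α) := by ring
            _ ≤ _ := hdiff
        refine h3.trans ?_
        have hd0 : 0 ≤ ((N : ℝ) + 1) ^ (1 - α) - (N : ℝ) ^ (1 - α) := by
          nlinarith [hdiff, Real.rpow_nonneg hpos.le (-α), h1α]
        nlinarith
      push_cast
      nlinarith [ih]

/-- Counting lemma over `Icc (-M) M` in `ℤ`. -/
lemma sum_natAbs_le (M : ℕ) (f : ℕ → ℝ≥0∞) :
    ∑ j ∈ Finset.Icc (-(M : ℤ)) (M : ℤ), f j.natAbs ≤ 2 * ∑ n ∈ Finset.range (M + 1), f n := by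
  rw [Finset.sum_comp (s := Finset.Icc (-(M : ℤ)) (M : ℤ)) f Int.natAbs]
  have himg : (Finset.Icc (-(M : ℤ)) (M : ℤ)).image Int.natAbs ⊆ Finset.range (M + 1) := by
    intro n hn
    rcases Finset.mem_image.mp hn with ⟨j, hj, rfl⟩
    rw [Finset.mem_Icc] at hj
    rw [Finset.mem_range]
    omega
  calc ∑ n ∈ (Finset.Icc (-(M : ℤ)) (M : ℤ)).image Int.natAbs,
        ((Finset.Icc (-(M : ℤ)) (M : ℤ)).filter (fun j => j.natAbs = n)).card • f n
      ≤ ∑ n ∈ (Finset.Icc (-(M : ℤ)) (M : ℤ)).image Int.natAbs, 2 * f n := by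
        refine Finset.sum_le_sum fun n _ => ?_
        rw [nsmul_eq_mul]
        refine mul_le_mul_left ?_ _
        have hcard : ((Finset.Icc (-(M : ℤ)) (M : ℤ)).filter (fun j => j.natAbs = n)).card ≤ 2 := by
          have hsub : (Finset.Icc (-(M : ℤ)) (M : ℤ)).filter (fun j => j.natAbs = n) ⊆
              {(n : ℤ), -(n : ℤ)} := by
            intro j hj
            rcases Finset.mem_filter.mp hj with ⟨_, hj2⟩
            simp only [Finset.mem_insert, Finset.mem_singleton]
            omega
          calc _ ≤ ({(n : ℤ), -(n : ℤ)} : Finset ℤ).card := Finset.card_le_card hsub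
            _ ≤ 2 := Finset.card_insert_le _ _ |>.trans (by simp)
        exact_mod_cast hcard
    _ ≤ ∑ n ∈ Finset.range (M + 1), 2 * f n := Finset.sum_le_sum_of_subset himg
    _ = 2 * ∑ n ∈ Finset.range (M + 1), f n := by rw [Finset.mul_sum]



noncomputable def xw (j : ℤ) : ℝ≥0∞ := (j.natAbs : ℝ≥0∞) + 1

lemma xw_ne_zero (j : ℤ) : xw j ≠ 0 := by simp [xw]
lemma xw_ne_top (j : ℤ) : xw j ≠ ⊤ := by simp [xw]

noncomputable def Ifin (r : ℕ) : Finset ℤ := Finset.Icc (-(2 ^ (r + 1) : ℤ)) (2 ^ (r + 1))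

noncomputable def Sig (a : ℤ → ℂ) (r : ℕ) : ℝ≥0∞ := ∑ j ∈ Ifin r, ENNReal.ofReal ‖a j‖

noncomputable def Ff (p : ℝ) (a : ℤ → ℂ) (r : ℕ) : ℝ≥0∞ :=
  ∑ j ∈ Ifin r, xw j ^ (p - 7/4) * ENNReal.ofReal ‖a j‖ ^ p

noncomputable def Gg (p : ℝ) (r : ℕ) : ℝ≥0∞ :=
  ∑ j ∈ Ifin r, xw j ^ (-((p - 7/4) / (p - 1)))

/-- Step 1: `hatAvg a r ≤ 2^{-r} Σ_r`. -/
lemma hat_le (a : ℤ → ℂ) (r : ℕ) :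
    hatAvg a r ≤ (2 : ℝ≥0∞) ^ (-(r : ℝ)) * Sig a r := by
  refine iSup₂_le fun m hm => ?_
  obtain ⟨hm1, hm2⟩ := hm
  have habs : (m.natAbs : ℤ) = |m| := (Int.abs_eq_natAbs m).symm
  -- numerator
  have hnum : ENNReal.ofReal ‖psum a m‖ ≤ Sig a r := by
    have hsub : Finset.Icc (min m 0) (max m 0) ⊆ Ifin r := by
      intro j hj
      rw [Finset.mem_Icc] at hj
      rw [Ifin, Finset.mem_Icc]
      rw [abs_lt] at hm2
      constructor <;> [skip; skip] <;> omega
    calc ENNReal.ofReal ‖psum a m‖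
        ≤ ENNReal.ofReal (∑ j ∈ Finset.Icc (min m 0) (max m 0), ‖a j‖) :=
          ENNReal.ofReal_le_ofReal (norm_sum_le _ _)
      _ = ∑ j ∈ Finset.Icc (min m 0) (max m 0), ENNReal.ofReal ‖a j‖ :=
          ENNReal.ofReal_sum_of_nonneg fun i _ => norm_nonneg _
      _ ≤ Sig a r := Finset.sum_le_sum_of_subset hsub
  -- denominator
  have hden : (2 : ℝ≥0∞) ^ (r : ℝ) ≤ ENNReal.ofReal ((m.natAbs : ℝ) + 1) := by
    have h2ri : ((2:ℤ) ^ r) ≤ (m.natAbs : ℤ) := by rw [habs]; exact hm1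
    have h2r : (2 ^ r : ℕ) ≤ m.natAbs := by exact_mod_cast h2ri
    have : ((2 ^ r : ℕ) : ℝ≥0∞) ≤ (m.natAbs : ℝ≥0∞) := by exact_mod_cast h2r
    rw [ENNReal.rpow_natCast]
    calc ((2 : ℝ≥0∞) ^ r) = ((2 ^ r : ℕ) : ℝ≥0∞) := by push_cast; ring
      _ ≤ (m.natAbs : ℝ≥0∞) := this
      _ ≤ (m.natAbs : ℝ≥0∞) + 1 := le_self_add
      _ = ENNReal.ofReal ((m.natAbs : ℝ) + 1) := by
          rw [ENNReal.ofReal_add (by positivity) zero_le_one]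
          rw [ENNReal.ofReal_natCast, ENNReal.ofReal_one]
  calc ENNReal.ofReal (‖psum a m‖ / ((m.natAbs : ℝ) + 1))
      = ENNReal.ofReal ‖psum a m‖ / ENNReal.ofReal ((m.natAbs : ℝ) + 1) :=
        ENNReal.ofReal_div_of_pos (by positivity)
    _ ≤ Sig a r / (2 : ℝ≥0∞) ^ (r : ℝ) := ENNReal.div_le_div hnum hden
    _ = (2 : ℝ≥0∞) ^ (-(r : ℝ)) * Sig a r := by
        rw [div_eq_mul_inv, ← ENNReal.rpow_neg, mul_comm]

/-- Step 2: Hölder. -/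
lemma sig_le (p : ℝ) (hp1 : 1 < p) (a : ℤ → ℂ) (r : ℕ) :
    Sig a r ≤ (Ff p a r) ^ (1 / p) * (Gg p r) ^ (1 / (p / (p - 1))) := by
  have hp0 : p ≠ 0 := by positivity
  have hpq : p.HolderConjugate (p / (p - 1)) := Real.HolderConjugate.conjExponent hp1
  have h := ENNReal.inner_le_Lp_mul_Lq (Ifin r)
    (fun j => xw j ^ ((p - 7/4) / p) * ENNReal.ofReal ‖a j‖)
    (fun j => xw j ^ (-((p - 7/4) / p))) hpq
  have h1 : ∀ j : ℤ, (xw j ^ ((p - 7/4) / p) * ENNReal.ofReal ‖a j‖) *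
      xw j ^ (-((p - 7/4) / p)) = ENNReal.ofReal ‖a j‖ := by
    intro j
    rw [mul_comm, ← mul_assoc, ← ENNReal.rpow_add _ _ (xw_ne_zero j) (xw_ne_top j)]
    simp
  have h2 : ∀ j : ℤ, (xw j ^ ((p - 7/4) / p) * ENNReal.ofReal ‖a j‖) ^ p =
      xw j ^ (p - 7/4) * ENNReal.ofReal ‖a j‖ ^ p := by
    intro j
    rw [ENNReal.mul_rpow_of_nonneg _ _ (by positivity : (0:ℝ) ≤ p), ← ENNReal.rpow_mul,
      div_mul_cancel₀ _ hp0]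
  have h3 : ∀ j : ℤ, (xw j ^ (-((p - 7/4) / p))) ^ (p / (p - 1)) =
      xw j ^ (-((p - 7/4) / (p - 1))) := by
    intro j
    rw [← ENNReal.rpow_mul]
    congr 1
    have hps : p - 1 ≠ 0 := sub_ne_zero_of_ne (ne_of_gt hp1)
    field_simp
  calc Sig a r = ∑ j ∈ Ifin r, (xw j ^ ((p - 7/4) / p) * ENNReal.ofReal ‖a j‖) *
        xw j ^ (-((p - 7/4) / p)) := by
        rw [Sig]; exact Finset.sum_congr rfl fun j _ => (h1 j).symm
    _ ≤ _ := h
    _ = (Ff p a r) ^ (1 / p) * (Gg p r) ^ (1 / (p / (p - 1))) := by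
        rw [Ff, Gg]
        congr 2
        · exact Finset.sum_congr rfl fun j _ => h2 j
        · exact Finset.sum_congr rfl fun j _ => h3 j



-- test scratch for gg_le / combine with sorried deps
noncomputable def Kg (p : ℝ) : ℝ≥0∞ :=
  (2 * ENNReal.ofReal (1 / (1 - (p - 7/4)/(p-1)) + 1)) *
    (2 : ℝ≥0∞) ^ ((2 : ℝ) * (1 - (p - 7/4)/(p-1)))

lemma gg_le (p : ℝ) (hp1 : 1 < p) (r : ℕ) :
    Gg p r ≤ Kg p * (2 : ℝ≥0∞) ^ ((r : ℝ) * (1 - (p - 7/4)/(p-1))) := by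
  set α := (p - 7/4)/(p-1) with hαdef
  have hp1' : 0 < p - 1 := by linarith
  have hα : α < 1 := by rw [hαdef, div_lt_one hp1']; linarith
  have h1α : 0 < 1 - α := by linarith
  have hterm : ∀ j : ℤ, xw j ^ (-α) =
      (fun n : ℕ => ENNReal.ofReal (((n : ℝ) + 1) ^ (-α))) j.natAbs := by
    intro j
    have hx : xw j = ENNReal.ofReal ((j.natAbs : ℝ) + 1) := by
      rw [ENNReal.ofReal_add (by positivity) zero_le_one]
      simp only [xw]; rw [ENNReal.ofReal_natCast, ENNReal.ofReal_one]
    rw [hx, ENNReal.ofReal_rpow_of_pos (by positivity)]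
  set M : ℕ := 2 ^ (r + 1) with hM
  have hIfin : Ifin r = Finset.Icc (-(M : ℤ)) (M : ℤ) := by
    rw [Ifin, hM]; norm_num
  have hMb : ((M : ℝ) + 1) ≤ ((2 : ℝ) ^ (r + 2 : ℕ)) := by
    rw [hM]; push_cast
    have h2 : (2:ℝ) ^ (r+2) = 2 ^ (r+1) + 2^(r+1) := by ring
    have h1 : (1:ℝ) ≤ 2 ^ (r+1) := one_le_pow₀ (by norm_num)
    linarith
  calc Gg p r
      = ∑ j ∈ Finset.Icc (-(M : ℤ)) (M : ℤ),
          (fun n : ℕ => ENNReal.ofReal (((n : ℝ) + 1) ^ (-α))) j.natAbs := by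
        rw [Gg, hIfin]; exact Finset.sum_congr rfl fun j _ => hterm j
    _ ≤ 2 * ∑ n ∈ Finset.range (M + 1), ENNReal.ofReal (((n : ℝ) + 1) ^ (-α)) :=
        sum_natAbs_le M _
    _ = 2 * ENNReal.ofReal (∑ n ∈ Finset.range (M + 1), ((n : ℝ) + 1) ^ (-α)) := by
        rw [ENNReal.ofReal_sum_of_nonneg fun i _ => by positivity]
    _ ≤ 2 * ENNReal.ofReal ((1 / (1 - α) + 1) * ((M + 1 : ℕ) : ℝ) ^ (1 - α)) := by
        refine mul_le_mul_right (ENNReal.ofReal_le_ofReal ?_) _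
        have := sumP hα (M + 1)
        push_cast at this ⊢
        exact this
    _ = 2 * ENNReal.ofReal (1 / (1 - α) + 1) * ENNReal.ofReal (((M : ℝ) + 1) ^ (1 - α)) := by
        rw [ENNReal.ofReal_mul (by positivity)]
        push_cast
        ring
    _ ≤ 2 * ENNReal.ofReal (1 / (1 - α) + 1) * ENNReal.ofReal (((2:ℝ) ^ (r + 2 : ℕ)) ^ (1 - α)) := by
        refine mul_le_mul_right (ENNReal.ofReal_le_ofReal ?_) _
        exact Real.rpow_le_rpow (by positivity) hMb (le_of_lt h1α)
    _ = Kg p * (2 : ℝ≥0∞) ^ ((r : ℝ) * (1 - α)) := by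
        rw [← ENNReal.ofReal_rpow_of_pos (by positivity), ENNReal.ofReal_pow (by norm_num)]
        have : (ENNReal.ofReal 2) ^ (r + 2 : ℕ) = (2 : ℝ≥0∞) ^ (((r : ℝ) + 2)) := by
          rw [← ENNReal.rpow_natCast]
          norm_num [ENNReal.ofReal_ofNat]
        rw [this, ← ENNReal.rpow_mul, Kg]
        rw [show ((r : ℝ) + 2) * (1 - α) = 2 * (1 - α) + (r : ℝ) * (1 - α) by ring, two_rpow_add]
        ring


noncomputable def Kc (p : ℝ) : ℝ≥0∞ := Kg p ^ (p - 1)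

lemma combine (p : ℝ) (hp1 : 1 < p) (a : ℤ → ℂ) (r : ℕ) :
    ((2 : ℝ≥0∞) ^ ((r : ℝ) * (1 - 1/p)) * hatAvg a r) ^ p ≤
      Kc p * ((2 : ℝ≥0∞) ^ (-(r : ℝ) * (1/4)) * Ff p a r) := by
  set α := (p - 7/4)/(p-1) with hαdef
  have hp0 : (0:ℝ) < p := by linarith
  have hp1' : 0 < p - 1 := by linarith
  have hps : p - 1 ≠ 0 := ne_of_gt hp1'
  have hstep1 : (2 : ℝ≥0∞) ^ ((r : ℝ) * (1 - 1/p)) * hatAvg a r ≤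
      (2 : ℝ≥0∞) ^ (-(r : ℝ) / p) * ((Ff p a r) ^ (1 / p) * (Gg p r) ^ (1 / (p / (p - 1)))) := by
    calc (2 : ℝ≥0∞) ^ ((r : ℝ) * (1 - 1/p)) * hatAvg a r
        ≤ (2 : ℝ≥0∞) ^ ((r : ℝ) * (1 - 1/p)) * ((2 : ℝ≥0∞) ^ (-(r : ℝ)) * Sig a r) :=
          mul_le_mul_right (hat_le a r) _
      _ = (2 : ℝ≥0∞) ^ (-(r : ℝ) / p) * Sig a r := by
          rw [← mul_assoc, ← two_rpow_add]
          congr 2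
          field_simp
          ring
      _ ≤ _ := mul_le_mul_right (sig_le p hp1 a r) _
  calc ((2 : ℝ≥0∞) ^ ((r : ℝ) * (1 - 1/p)) * hatAvg a r) ^ p
      ≤ ((2 : ℝ≥0∞) ^ (-(r : ℝ) / p) * ((Ff p a r) ^ (1 / p) * (Gg p r) ^ (1 / (p / (p - 1))))) ^ p :=
        ENNReal.rpow_le_rpow hstep1 (le_of_lt hp0)
    _ = (2 : ℝ≥0∞) ^ (-(r : ℝ)) * (Ff p a r * (Gg p r) ^ (p - 1)) := by
        rw [ENNReal.mul_rpow_of_nonneg _ _ (le_of_lt hp0),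
          ENNReal.mul_rpow_of_nonneg _ _ (le_of_lt hp0),
          ← ENNReal.rpow_mul, ← ENNReal.rpow_mul, ← ENNReal.rpow_mul,
          show (1 / p) * p = 1 by field_simp, ENNReal.rpow_one,
          show -(r:ℝ) / p * p = -(r:ℝ) by field_simp,
          show (1 / (p / (p - 1))) * p = p - 1 by rw [one_div_div]; exact div_mul_cancel₀ _ (ne_of_gt hp0)]
    _ ≤ (2 : ℝ≥0∞) ^ (-(r : ℝ)) * (Ff p a r * (Kg p * (2 : ℝ≥0∞) ^ ((r : ℝ) * (1 - α))) ^ (p - 1)) := by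
        refine mul_le_mul_right (mul_le_mul_right (ENNReal.rpow_le_rpow (gg_le p hp1 r) (le_of_lt hp1')) _) _
    _ = Kc p * ((2 : ℝ≥0∞) ^ (-(r : ℝ) * (1/4)) * Ff p a r) := by
        rw [ENNReal.mul_rpow_of_nonneg _ _ (le_of_lt hp1'), ← ENNReal.rpow_mul, Kc]
        rw [show (r : ℝ) * (1 - α) * (p - 1) = (3/4 : ℝ) * r by
          rw [hαdef]; field_simp; ring]
        rw [show (-(r : ℝ) * (1/4)) = -(r : ℝ) + (3/4 : ℝ) * r by ring, two_rpow_add]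
        ring


noncomputable def Tt (p : ℝ) (a : ℤ → ℂ) : ℝ≥0∞ :=
  ∑' j : ℤ, xw j ^ (p - 2) * ENNReal.ofReal ‖a j‖ ^ p
noncomputable def Kf : ℝ≥0∞ :=
  (2 : ℝ≥0∞) ^ ((1 : ℝ) / 2) * (1 - (2 : ℝ≥0∞) ^ (-(1 / 4) : ℝ))⁻¹
lemma fubini (p : ℝ) (hp1 : 1 < p) (a : ℤ → ℂ) :
    ∑' r : ℕ, (2 : ℝ≥0∞) ^ (-(r : ℝ) * (1 / 4)) * Ff p a r ≤ Kf * Tt p a := by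
  set y : ℝ≥0∞ := (2 : ℝ≥0∞) ^ (-(1 / 4) : ℝ) with hy
  set U : ℤ → ℝ≥0∞ := fun j => xw j ^ (p - 7/4) * ENNReal.ofReal ‖a j‖ ^ p with hU
  have h_pow : ∀ r : ℕ, (2 : ℝ≥0∞) ^ (-(r : ℝ) * (1 / 4)) = y ^ r := by
    intro r
    rw [hy, ← ENNReal.rpow_natCast ((2 : ℝ≥0∞) ^ (-(1 / 4) : ℝ)) r, ← ENNReal.rpow_mul]
    congr 1
    ring
  have hFr : ∀ r : ℕ, Ff p a r = ∑' j : ℤ, (if j ∈ Ifin r then U j else 0) := by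
    intro r
    rw [tsum_eq_sum (s := Ifin r) (fun b hb => if_neg hb)]
    exact (Finset.sum_congr rfl fun j hj => if_pos hj).symm
  have inner_bound : ∀ j : ℤ,
      ∑' r : ℕ, y ^ r * (if j ∈ Ifin r then U j else 0) ≤
        Kf * (xw j ^ (p - 2) * ENNReal.ofReal ‖a j‖ ^ p) := by
    intro j
    set n : ℕ := j.natAbs with hn
    set r0 : ℕ := Nat.clog 2 n - 1 with hr0
    have hmem : ∀ r : ℕ, j ∈ Ifin r ↔ r0 ≤ r := by
      intro r
      rw [Ifin, Finset.mem_Icc]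
      have habs : (n : ℤ) = |j| := by rw [hn]; exact (Int.abs_eq_natAbs j).symm
      constructor
      · rintro ⟨h1, h2⟩
        have hj : (n : ℤ) ≤ 2 ^ (r + 1) := by rw [habs]; rw [abs_le]; exact ⟨h1, h2⟩
        have hjn : n ≤ 2 ^ (r + 1) := by exact_mod_cast hj
        have := (Nat.clog_le_iff_le_pow one_lt_two).mpr hjn
        omega
      · intro hr
        have hclog : Nat.clog 2 n ≤ r + 1 := by omega
        have hjn : n ≤ 2 ^ (r + 1) := (Nat.clog_le_iff_le_pow one_lt_two).mp hclog
        have hj : |j| ≤ (2 : ℤ) ^ (r + 1) := by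
          rw [← habs]; exact_mod_cast hjn
        rw [abs_le] at hj
        exact hj
    have hterm : ∀ r : ℕ, y ^ r * (if j ∈ Ifin r then U j else 0) =
        (if r0 ≤ r then y ^ r else 0) * U j := by
      intro r
      by_cases h : r0 ≤ r
      · rw [if_pos ((hmem r).mpr h), if_pos h, mul_comm (y ^ r) (U j), mul_comm]
      · rw [if_neg (fun hc => h ((hmem r).mp hc)), if_neg h, mul_zero, zero_mul]
    have hxw : xw j ≤ (2 : ℝ≥0∞) ^ ((r0 : ℝ) + 2) := by
      have hnle : n ≤ 2 ^ (r0 + 1) := (Nat.clog_le_iff_le_pow one_lt_two).mp (by omega)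
      have h2 : (2 : ℕ) ^ (r0 + 2) = 2 ^ (r0 + 1) + 2 ^ (r0 + 1) := by ring
      have h1 : (1 : ℕ) ≤ 2 ^ (r0 + 1) := Nat.one_le_two_pow
      have hℕ : n + 1 ≤ 2 ^ (r0 + 2) := by omega
      calc xw j = ((n + 1 : ℕ) : ℝ≥0∞) := by rw [xw, hn]; push_cast; ring
        _ ≤ ((2 ^ (r0 + 2) : ℕ) : ℝ≥0∞) := by exact_mod_cast hℕ
        _ = (2 : ℝ≥0∞) ^ ((r0 : ℝ) + 2) := by
            push_cast
            rw [show ((r0 : ℝ) + 2) = (((r0 + 2 : ℕ) : ℝ)) by push_cast; ring,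
              ENNReal.rpow_natCast]
    have hkey : y ^ r0 ≤ (2 : ℝ≥0∞) ^ ((1 : ℝ) / 2) * xw j ^ (-(1 / 4) : ℝ) := by
      calc y ^ r0 = (2 : ℝ≥0∞) ^ ((-(1 / 4) : ℝ) * r0) := by
            rw [hy, ← ENNReal.rpow_natCast ((2 : ℝ≥0∞) ^ (-(1 / 4) : ℝ)) r0, ← ENNReal.rpow_mul]
        _ = (2 : ℝ≥0∞) ^ ((1 : ℝ) / 2) * (2 : ℝ≥0∞) ^ (((r0 : ℝ) + 2) * (-(1 / 4) : ℝ)) := by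
            rw [← two_rpow_add]
            congr 1
            ring
        _ = (2 : ℝ≥0∞) ^ ((1 : ℝ) / 2) * ((2 : ℝ≥0∞) ^ ((r0 : ℝ) + 2)) ^ (-(1 / 4) : ℝ) := by
            rw [← ENNReal.rpow_mul]
        _ ≤ (2 : ℝ≥0∞) ^ ((1 : ℝ) / 2) * xw j ^ (-(1 / 4) : ℝ) := by
            refine mul_le_mul_right ?_ _
            rw [show (-(1 / 4) : ℝ) = -(1 / 4 : ℝ) by norm_num, ENNReal.rpow_neg,
              ENNReal.rpow_neg]
            exact ENNReal.inv_le_inv.mpr (ENNReal.rpow_le_rpow hxw (by norm_num))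
    calc ∑' r : ℕ, y ^ r * (if j ∈ Ifin r then U j else 0)
        = (∑' r : ℕ, (if r0 ≤ r then y ^ r else 0)) * U j := by
          rw [← ENNReal.tsum_mul_right]
          exact tsum_congr hterm
      _ = y ^ r0 * (1 - y)⁻¹ * U j := by rw [tsum_ite_geo]
      _ ≤ (2 : ℝ≥0∞) ^ ((1 : ℝ) / 2) * xw j ^ (-(1 / 4) : ℝ) * (1 - y)⁻¹ * U j := by
          exact mul_le_mul_left (mul_le_mul_left hkey _) _
      _ = Kf * (xw j ^ (-(1 / 4) : ℝ) * U j) := by rw [Kf, hy]; ring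
      _ = Kf * (xw j ^ (p - 2) * ENNReal.ofReal ‖a j‖ ^ p) := by
          rw [hU]
          congr 1
          rw [← mul_assoc, ← ENNReal.rpow_add _ _ (xw_ne_zero j) (xw_ne_top j)]
          congr 2
          ring
  calc ∑' r : ℕ, (2 : ℝ≥0∞) ^ (-(r : ℝ) * (1 / 4)) * Ff p a r
      = ∑' r : ℕ, ∑' j : ℤ, y ^ r * (if j ∈ Ifin r then U j else 0) := by
        refine tsum_congr fun r => ?_
        rw [h_pow r, hFr r, ENNReal.tsum_mul_left]
    _ = ∑' j : ℤ, ∑' r : ℕ, y ^ r * (if j ∈ Ifin r then U j else 0) := ENNReal.tsum_comm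
    _ ≤ ∑' j : ℤ, Kf * (xw j ^ (p - 2) * ENNReal.ofReal ‖a j‖ ^ p) :=
        ENNReal.tsum_le_tsum inner_bound
    _ = Kf * Tt p a := by rw [ENNReal.tsum_mul_left, Tt]



noncomputable def Ms (p : ℝ) : ℝ≥0∞ :=
  (1 - (2 : ℝ≥0∞) ^ (-(p - 1)))⁻¹ + (1 - (2 : ℝ≥0∞) ^ (-1 : ℝ))⁻¹

lemma schur (p : ℝ) (hp1 : 1 < p) (a : ℤ → ℂ) :
    ∑' k : ℕ, ((2 : ℝ≥0∞) ^ ((k : ℝ) * (1 - 1 / p)) *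
        ⨆ r : ℕ, min 1 ((2 : ℝ≥0∞) ^ ((r : ℝ) - (k : ℝ))) * hatAvg a r) ^ p ≤
      Ms p * ∑' r : ℕ, ((2 : ℝ≥0∞) ^ ((r : ℝ) * (1 - 1 / p)) * hatAvg a r) ^ p := by
  have hp0 : (0 : ℝ) < p := by linarith
  set x : ℕ → ℝ≥0∞ := fun r => (2 : ℝ≥0∞) ^ ((r : ℝ) * (1 - 1 / p)) * hatAvg a r with hx
  set K : ℕ → ℕ → ℝ≥0∞ := fun k r =>
    min 1 ((2 : ℝ≥0∞) ^ ((r : ℝ) - (k : ℝ))) * (2 : ℝ≥0∞) ^ (((k : ℝ) - (r : ℝ)) * (1 - 1 / p))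
    with hK
  set e : ℕ → ℕ → ℝ≥0∞ := fun k r =>
    if k ≤ r then ((2 : ℝ≥0∞) ^ (-(p - 1))) ^ (r - k) else ((2 : ℝ≥0∞) ^ (-1 : ℝ)) ^ (k - r)
    with he
  -- pointwise identity
  have hpt : ∀ k : ℕ, (2 : ℝ≥0∞) ^ ((k : ℝ) * (1 - 1 / p)) *
      (⨆ r : ℕ, min 1 ((2 : ℝ≥0∞) ^ ((r : ℝ) - (k : ℝ))) * hatAvg a r) =
      ⨆ r : ℕ, K k r * x r := by
    intro k
    rw [ENNReal.mul_iSup]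
    refine iSup_congr fun r => ?_
    rw [hK, hx]
    simp only []
    rw [show (2 : ℝ≥0∞) ^ ((k : ℝ) * (1 - 1 / p)) =
      (2 : ℝ≥0∞) ^ (((k : ℝ) - (r : ℝ)) * (1 - 1 / p)) * (2 : ℝ≥0∞) ^ ((r : ℝ) * (1 - 1 / p)) by
        rw [← two_rpow_add]; congr 1; ring]
    ring
  -- kernel bound
  have hKe : ∀ k r : ℕ, (K k r) ^ p ≤ e k r := by
    intro k r
    simp only [hK, he]
    by_cases h : k ≤ r
    · rw [if_pos h]
      have h1 : min 1 ((2 : ℝ≥0∞) ^ ((r : ℝ) - (k : ℝ))) *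
          (2 : ℝ≥0∞) ^ (((k : ℝ) - (r : ℝ)) * (1 - 1 / p)) ≤
          (2 : ℝ≥0∞) ^ (((k : ℝ) - (r : ℝ)) * (1 - 1 / p)) := by
        refine le_trans (mul_le_mul_left (min_le_left _ _) _) (by rw [one_mul])
      refine le_trans (ENNReal.rpow_le_rpow h1 hp0.le) ?_
      rw [← ENNReal.rpow_mul, ← ENNReal.rpow_natCast ((2 : ℝ≥0∞) ^ (-(p - 1))) (r - k),
        ← ENNReal.rpow_mul]
      refine le_of_eq ?_
      congr 1
      have : ((r - k : ℕ) : ℝ) = (r : ℝ) - (k : ℝ) := by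
        push_cast [Nat.cast_sub h]; ring
      rw [this]
      field_simp
      ring
    · rw [if_neg h]
      push_neg at h
      have h1 : min 1 ((2 : ℝ≥0∞) ^ ((r : ℝ) - (k : ℝ))) *
          (2 : ℝ≥0∞) ^ (((k : ℝ) - (r : ℝ)) * (1 - 1 / p)) ≤
          (2 : ℝ≥0∞) ^ (((r : ℝ) - (k : ℝ)) + ((k : ℝ) - (r : ℝ)) * (1 - 1 / p)) := by
        rw [two_rpow_add]
        exact mul_le_mul_left (min_le_right _ _) _
      refine le_trans (ENNReal.rpow_le_rpow h1 hp0.le) ?_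
      rw [← ENNReal.rpow_mul, ← ENNReal.rpow_natCast ((2 : ℝ≥0∞) ^ (-1 : ℝ)) (k - r),
        ← ENNReal.rpow_mul]
      refine le_of_eq ?_
      congr 1
      have : ((k - r : ℕ) : ℝ) = (k : ℝ) - (r : ℝ) := by
        push_cast [Nat.cast_sub (le_of_lt h)]; ring
      rw [this]
      field_simp
      ring
  -- sup ≤ lp sum
  have hsup : ∀ k : ℕ, (⨆ r : ℕ, K k r * x r) ^ p ≤ ∑' r : ℕ, (K k r) ^ p * (x r) ^ p := by
    intro k
    have h1 : (⨆ r : ℕ, K k r * x r) ≤ (∑' r : ℕ, (K k r * x r) ^ p) ^ (1 / p) := by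
      refine iSup_le fun r => ?_
      have : K k r * x r = ((K k r * x r) ^ p) ^ (1 / p) := by
        rw [← ENNReal.rpow_mul, mul_one_div_cancel (ne_of_gt hp0), ENNReal.rpow_one]
      rw [this]
      exact ENNReal.rpow_le_rpow (ENNReal.le_tsum r) (by positivity)
    calc (⨆ r : ℕ, K k r * x r) ^ p ≤ ((∑' r : ℕ, (K k r * x r) ^ p) ^ (1 / p)) ^ p :=
          ENNReal.rpow_le_rpow h1 hp0.le
      _ = ∑' r : ℕ, (K k r * x r) ^ p := by
          rw [← ENNReal.rpow_mul, one_div_mul_cancel (ne_of_gt hp0), ENNReal.rpow_one]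
      _ = ∑' r : ℕ, (K k r) ^ p * (x r) ^ p := by
          exact tsum_congr fun r => ENNReal.mul_rpow_of_nonneg _ _ hp0.le
  calc ∑' k : ℕ, ((2 : ℝ≥0∞) ^ ((k : ℝ) * (1 - 1 / p)) *
        ⨆ r : ℕ, min 1 ((2 : ℝ≥0∞) ^ ((r : ℝ) - (k : ℝ))) * hatAvg a r) ^ p
      = ∑' k : ℕ, (⨆ r : ℕ, K k r * x r) ^ p := by
        exact tsum_congr fun k => by rw [hpt k]
    _ ≤ ∑' k : ℕ, ∑' r : ℕ, (K k r) ^ p * (x r) ^ p := ENNReal.tsum_le_tsum hsup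
    _ ≤ ∑' k : ℕ, ∑' r : ℕ, e k r * (x r) ^ p := by
        refine ENNReal.tsum_le_tsum fun k => ENNReal.tsum_le_tsum fun r =>
          mul_le_mul_left (hKe k r) _
    _ = ∑' r : ℕ, ∑' k : ℕ, e k r * (x r) ^ p := ENNReal.tsum_comm
    _ = ∑' r : ℕ, (∑' k : ℕ, e k r) * (x r) ^ p := by
        exact tsum_congr fun r => ENNReal.tsum_mul_right
    _ ≤ ∑' r : ℕ, Ms p * (x r) ^ p := by
        refine ENNReal.tsum_le_tsum fun r => mul_le_mul_left ?_ _
        rw [he, Ms]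
        exact tsum_twoSided _ _ r
    _ = Ms p * ∑' r : ℕ, (x r) ^ p := ENNReal.tsum_mul_left

end ApAux

/-- For `1 < p < ∞` there is `C_p > 0` such that for every complex sequence
`a` with `J_p = (∑_{k∈ℤ}(|k|+1)^{p-2}|a_k|^p)^{1/p} < ∞`,
`A_p(a) = (∑_{k≥0} (2^{k/p'} sup_{r≥0} min(1,2^{r-k}) â_{2^r})^p)^{1/p} ≤ C_p J_p`,
where `1/p' = 1 - 1/p`. -/
theorem Ap_le_Jp (p : ℝ) (hp1 : 1 < p) :
    ∃ C : ℝ, 0 < C ∧ ∀ a : ℤ → ℂ,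
      (∑' k : ℤ, ((k.natAbs : ℝ≥0∞) + 1) ^ (p - 2) *
          (ENNReal.ofReal ‖a k‖) ^ p) ^ (1 / p) < ⊤ →
      (∑' k : ℕ, ((2 : ℝ≥0∞) ^ ((k : ℝ) * (1 - 1 / p)) *
          ⨆ r : ℕ, min 1 ((2 : ℝ≥0∞) ^ ((r : ℝ) - (k : ℝ))) * hatAvg a r) ^ p) ^ (1 / p) ≤
        ENNReal.ofReal C *
          (∑' k : ℤ, ((k.natAbs : ℝ≥0∞) + 1) ^ (p - 2) *
            (ENNReal.ofReal ‖a k‖) ^ p) ^ (1 / p) := by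
  classical
  have hp0 : (0 : ℝ) < p := by linarith
  have hp1' : (0 : ℝ) < p - 1 := by linarith
  -- the constant
  set Cf : ℝ≥0∞ := ApAux.Ms p * (ApAux.Kc p * ApAux.Kf) with hCfdef
  have hlt : ∀ c : ℝ, 0 < c → (2 : ℝ≥0∞) ^ (-c) < 1 := by
    intro c hc
    rw [ENNReal.rpow_neg]
    refine ENNReal.inv_lt_one.mpr ?_
    calc (1 : ℝ≥0∞) = (2 : ℝ≥0∞) ^ (0 : ℝ) := by rw [ENNReal.rpow_zero]
      _ < (2 : ℝ≥0∞) ^ c :=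
        ENNReal.rpow_lt_rpow_of_exponent_lt (by norm_num) (by norm_num) hc
  have hinv_ne_top : ∀ c : ℝ, 0 < c → (1 - (2 : ℝ≥0∞) ^ (-c))⁻¹ ≠ ⊤ := by
    intro c hc
    rw [ENNReal.inv_ne_top]
    intro h0
    rw [tsub_eq_zero_iff_le] at h0
    exact absurd h0 (not_le_of_gt (hlt c hc))
  have hMs_ne_top : ApAux.Ms p ≠ ⊤ := by
    rw [ApAux.Ms]
    refine ENNReal.add_ne_top.mpr ⟨hinv_ne_top (p - 1) hp1', ?_⟩
    have := hinv_ne_top 1 one_pos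
    simpa using this
  have hα : (p - 7/4) / (p - 1) < 1 := by
    rw [div_lt_one hp1']; linarith
  have hKg_ne_top : ApAux.Kg p ≠ ⊤ := by
    rw [ApAux.Kg]
    refine ENNReal.mul_ne_top (ENNReal.mul_ne_top (by norm_num) ENNReal.ofReal_ne_top) ?_
    exact ENNReal.rpow_ne_top_of_nonneg (by nlinarith) (by norm_num)
  have hKc_ne_top : ApAux.Kc p ≠ ⊤ := by
    rw [ApAux.Kc]
    exact ENNReal.rpow_ne_top_of_nonneg (by linarith) hKg_ne_top
  have hKf_ne_top : ApAux.Kf ≠ ⊤ := by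
    rw [ApAux.Kf]
    refine ENNReal.mul_ne_top (ENNReal.rpow_ne_top_of_nonneg (by norm_num) (by norm_num)) ?_
    have := hinv_ne_top (1/4) (by norm_num)
    simpa using this
  have hCf_ne_top : Cf ≠ ⊤ :=
    ENNReal.mul_ne_top hMs_ne_top (ENNReal.mul_ne_top hKc_ne_top hKf_ne_top)
  have hCfp_ne_top : Cf ^ (1 / p) ≠ ⊤ :=
    ENNReal.rpow_ne_top_of_nonneg (by positivity) hCf_ne_top
  refine ⟨(Cf ^ (1 / p)).toReal + 1, by positivity, fun a _ => ?_⟩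
  -- main estimate
  have hmain : (∑' k : ℕ, ((2 : ℝ≥0∞) ^ ((k : ℝ) * (1 - 1 / p)) *
      ⨆ r : ℕ, min 1 ((2 : ℝ≥0∞) ^ ((r : ℝ) - (k : ℝ))) * hatAvg a r) ^ p) ≤
      Cf * ApAux.Tt p a := by
    have h2 : ∑' r : ℕ, ((2 : ℝ≥0∞) ^ ((r : ℝ) * (1 - 1 / p)) * hatAvg a r) ^ p ≤
        ApAux.Kc p * (ApAux.Kf * ApAux.Tt p a) := by
      calc ∑' r : ℕ, ((2 : ℝ≥0∞) ^ ((r : ℝ) * (1 - 1 / p)) * hatAvg a r) ^ p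
          ≤ ∑' r : ℕ, ApAux.Kc p * ((2 : ℝ≥0∞) ^ (-(r : ℝ) * (1/4)) * ApAux.Ff p a r) :=
            ENNReal.tsum_le_tsum fun r => ApAux.combine p hp1 a r
        _ = ApAux.Kc p * ∑' r : ℕ, (2 : ℝ≥0∞) ^ (-(r : ℝ) * (1/4)) * ApAux.Ff p a r :=
            ENNReal.tsum_mul_left
        _ ≤ ApAux.Kc p * (ApAux.Kf * ApAux.Tt p a) :=
            mul_le_mul_right (ApAux.fubini p hp1 a) _
    calc (∑' k : ℕ, ((2 : ℝ≥0∞) ^ ((k : ℝ) * (1 - 1 / p)) *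
          ⨆ r : ℕ, min 1 ((2 : ℝ≥0∞) ^ ((r : ℝ) - (k : ℝ))) * hatAvg a r) ^ p)
        ≤ ApAux.Ms p * ∑' r : ℕ, ((2 : ℝ≥0∞) ^ ((r : ℝ) * (1 - 1 / p)) * hatAvg a r) ^ p :=
          ApAux.schur p hp1 a
      _ ≤ ApAux.Ms p * (ApAux.Kc p * (ApAux.Kf * ApAux.Tt p a)) := mul_le_mul_right h2 _
      _ = Cf * ApAux.Tt p a := by rw [hCfdef]; ring
  have hTt : ApAux.Tt p a = ∑' k : ℤ, ((k.natAbs : ℝ≥0∞) + 1) ^ (p - 2) *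
      (ENNReal.ofReal ‖a k‖) ^ p := rfl
  calc (∑' k : ℕ, ((2 : ℝ≥0∞) ^ ((k : ℝ) * (1 - 1 / p)) *
        ⨆ r : ℕ, min 1 ((2 : ℝ≥0∞) ^ ((r : ℝ) - (k : ℝ))) * hatAvg a r) ^ p) ^ (1 / p)
      ≤ (Cf * ApAux.Tt p a) ^ (1 / p) := ENNReal.rpow_le_rpow hmain (by positivity)
    _ = Cf ^ (1 / p) * (ApAux.Tt p a) ^ (1 / p) :=
        ENNReal.mul_rpow_of_nonneg _ _ (by positivity)
    _ ≤ ENNReal.ofReal ((Cf ^ (1 / p)).toReal + 1) * (ApAux.Tt p a) ^ (1 / p) := by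
        refine mul_le_mul_left ?_ _
        calc Cf ^ (1 / p) = ENNReal.ofReal ((Cf ^ (1 / p)).toReal) :=
              (ENNReal.ofReal_toReal hCfp_ne_top).symm
          _ ≤ ENNReal.ofReal ((Cf ^ (1 / p)).toReal + 1) :=
              ENNReal.ofReal_le_ofReal (by linarith)
    _ = ENNReal.ofReal ((Cf ^ (1 / p)).toReal + 1) *
        (∑' k : ℤ, ((k.natAbs : ℝ≥0∞) + 1) ^ (p - 2) *
          (ENNReal.ofReal ‖a k‖) ^ p) ^ (1 / p) := by rw [hTt]
end
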